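/- arXiv:1001.3106 — 4 statements merged into one kernel-verified Lean document; each statement's English description precedes it below -/
import Mathlib

section
/- Let Δ be a complete fan in ℝ^n with n ≥ 1, and let S = {x ∈ ℝ^n : ‖x‖ = 1}. Then: (i) the sets relint(σ) ∩ S, for nonzero σ ∈ Δ (where relint denotes the relative interior of σ, i.e., its interior inside its affine span), are nonempty, pairwise disjoint for distinct cones, and their union is all of S; (ii) for every nonzero σ ∈ Δ, the set (σ ∩ S) ∖ relint(σ) equals the union of the sets τ ∩ S over the nonzero proper faces τ of σ. (This expresses that the cells e_σ = σ ∩ S form a cellular decomposition of the sphere S.) -/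
open scoped RealInnerProductSpace

noncomputable section

abbrev Euc (n : ℕ) := EuclideanSpace ℝ (Fin n)

/-- A vector of `ℝ^n` has integral coordinates. -/
def IsIntegralVec {n : ℕ} (x : Euc n) : Prop := ∀ i, ∃ m : ℤ, x i = (m : ℝ)

/-- A rational polyhedral cone in `ℝ^n`. -/
def IsRatPolyCone {n : ℕ} (σ : Set (Euc n)) : Prop :=
  ∃ (k : ℕ) (v : Fin k → Euc n), (∀ i, IsIntegralVec (v i)) ∧
    σ = {x | ∃ lam : Fin k → ℝ, (∀ i, 0 ≤ lam i) ∧ x = ∑ i, lam i • v i}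

/-- Strict convexity of a cone: `σ ∩ (−σ) = {0}`. -/
def IsStrictlyConvexCone {n : ℕ} (σ : Set (Euc n)) : Prop := σ ∩ (-σ) = {0}

/-- The dual cone. -/
def dualCone {n : ℕ} (σ : Set (Euc n)) : Set (Euc n) := {u | ∀ x ∈ σ, 0 ≤ ⟪u, x⟫}

/-- The orthogonal of a cone. -/
def orthCone {n : ℕ} (σ : Set (Euc n)) : Set (Euc n) := {u | ∀ x ∈ σ, ⟪u, x⟫ = 0}

/-- `τ` is a face of `σ`. -/
def IsFaceOf {n : ℕ} (τ σ : Set (Euc n)) : Prop :=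
  ∃ u ∈ dualCone σ, τ = σ ∩ {x | ⟪u, x⟫ = 0}

/-- The dimension of a cone: the dimension of its linear span. -/
def coneDim {n : ℕ} (σ : Set (Euc n)) : ℕ := Module.finrank ℝ (Submodule.span ℝ σ)

/-- A fan in `ℝ^n`. -/
structure IsFan {n : ℕ} (Δ : Set (Set (Euc n))) : Prop where
  finite : Δ.Finite
  poly : ∀ σ ∈ Δ, IsRatPolyCone σ
  strictconv : ∀ σ ∈ Δ, IsStrictlyConvexCone σ
  face_mem : ∀ σ ∈ Δ, ∀ τ, IsFaceOf τ σ → τ ∈ Δ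
  inter_face : ∀ σ ∈ Δ, ∀ τ ∈ Δ, IsFaceOf (σ ∩ τ) σ ∧ IsFaceOf (σ ∩ τ) τ

/-- A complete fan: the union of the cones is everything. -/
def IsCompleteFan {n : ℕ} (Δ : Set (Set (Euc n))) : Prop :=
  IsFan Δ ∧ ⋃₀ Δ = Set.univ

section Helpers

variable {n : ℕ} {σ : Set (Euc n)}

lemma mem_interior_coe_iff {E : Type*} [PseudoMetricSpace E] {p : E → Prop} {s : Set E}
    {x : Subtype p}
    (hd : ∀ a b : Subtype p, dist a b = dist (a : E) (b : E)) :
    x ∈ interior ((↑) ⁻¹' s : Set (Subtype p)) ↔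
      ∃ ε > 0, ∀ y : E, p y → dist y (x : E) < ε → y ∈ s := by
  rw [mem_interior_iff_mem_nhds, Metric.mem_nhds_iff]
  constructor
  · rintro ⟨ε, hε, hb⟩
    refine ⟨ε, hε, fun y hy hdy => hb (a := ⟨y, hy⟩) ?_⟩
    simpa [Metric.mem_ball, hd] using hdy
  · rintro ⟨ε, hε, h⟩
    exact ⟨ε, hε, fun z hz => h z z.2 (by simpa [Metric.mem_ball, hd] using hz)⟩

lemma mem_intrinsicInterior_iff {x : Euc n} :
    x ∈ intrinsicInterior ℝ σ ↔
      x ∈ affineSpan ℝ σ ∧ ∃ ε > 0, ∀ y ∈ affineSpan ℝ σ, dist y x < ε → y ∈ σ := by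
  constructor
  · rintro ⟨x', hx', rfl⟩
    obtain ⟨ε, hε, hb⟩ := (mem_interior_coe_iff (fun a b => Subtype.dist_eq a b)).1 hx'
    exact ⟨x'.2, ε, hε, hb⟩
  · rintro ⟨hxA, ε, hε, hb⟩
    exact ⟨⟨x, hxA⟩, (mem_interior_coe_iff (fun a b => Subtype.dist_eq a b)).2 ⟨ε, hε, hb⟩, rfl⟩

lemma ratPoly_convex (h : IsRatPolyCone σ) : Convex ℝ σ := by
  obtain ⟨k, v, -, rfl⟩ := h
  rintro x ⟨l1, hl1, rfl⟩ y ⟨l2, hl2, rfl⟩ a b ha hb hab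
  refine ⟨fun i => a * l1 i + b * l2 i, fun i => add_nonneg (mul_nonneg ha (hl1 i)) (mul_nonneg hb (hl2 i)), ?_⟩
  simp [add_smul, mul_smul, Finset.smul_sum, Finset.sum_add_distrib]

lemma ratPoly_zero_mem (h : IsRatPolyCone σ) : (0 : Euc n) ∈ σ := by
  obtain ⟨k, v, -, rfl⟩ := h
  exact ⟨0, fun i => le_refl 0, by simp⟩

lemma ratPoly_smul_mem (h : IsRatPolyCone σ) {t : ℝ} (ht : 0 ≤ t) {x : Euc n}
    (hx : x ∈ σ) : t • x ∈ σ := by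
  obtain ⟨k, v, -, rfl⟩ := h
  obtain ⟨l, hl, rfl⟩ := hx
  exact ⟨fun i => t * l i, fun i => mul_nonneg ht (hl i),
    by simp [Finset.smul_sum, mul_smul]⟩

lemma affineSpan_coe_eq (h0 : (0:Euc n) ∈ σ) :
    (affineSpan ℝ σ : Set (Euc n)) = (Submodule.span ℝ σ : Set (Euc n)) := by
  rw [← affineSpan_insert_zero, Set.insert_eq_self.2 h0]

lemma mem_affineSpan_iff_span (h0 : (0:Euc n) ∈ σ) {x : Euc n} :
    x ∈ affineSpan ℝ σ ↔ x ∈ Submodule.span ℝ σ := by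
  have := affineSpan_coe_eq h0
  constructor <;> intro h
  · have hx : x ∈ (affineSpan ℝ σ : Set (Euc n)) := h
    rw [this] at hx; exact hx
  · show x ∈ (affineSpan ℝ σ : Set (Euc n)); rw [this]; exact h

lemma inner_eq_zero_of_relint {u x : Euc n} (hu : u ∈ dualCone σ)
    (hx : x ∈ intrinsicInterior ℝ σ) (hux : ⟪u, x⟫ = 0) {y : Euc n} (hy : y ∈ σ) :
    ⟪u, y⟫ = 0 := by
  obtain ⟨hxA, ε, hε, hball⟩ := mem_intrinsicInterior_iff.1 hx
  have hxσ : x ∈ σ := intrinsicInterior_subset hx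
  set δ : ℝ := ε / (2 * (dist x y + 1)) with hδdef
  have hδ : 0 < δ := by have := dist_nonneg (x := x) (y := y); positivity
  have hzA : x + δ • (x - y) ∈ affineSpan ℝ σ := by
    have := AffineSubspace.smul_vsub_vadd_mem (affineSpan ℝ σ) δ
      (subset_affineSpan ℝ σ hxσ) (subset_affineSpan ℝ σ hy) (subset_affineSpan ℝ σ hxσ)
    simpa [vsub_eq_sub, vadd_eq_add, add_comm] using this
  have hdist : dist (x + δ • (x - y)) x < ε := by
    rw [dist_eq_norm]
    have : x + δ • (x - y) - x = δ • (x - y) := by abel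
    rw [this, norm_smul, Real.norm_eq_abs, abs_of_pos hδ, ← dist_eq_norm]
    have h1 : δ * dist x y ≤ δ * (dist x y + 1) := by nlinarith [hδ.le]
    have h2 : δ * (dist x y + 1) = ε / 2 := by
      rw [hδdef]; field_simp
    linarith
  have hz : x + δ • (x - y) ∈ σ := hball _ hzA hdist
  have h1 : (0:ℝ) ≤ ⟪u, x + δ • (x - y)⟫ := hu _ hz
  rw [inner_add_right, inner_smul_right, inner_sub_right, hux] at h1
  have h2 : (0:ℝ) ≤ ⟪u, y⟫ := hu _ hy
  nlinarith

lemma smul_mem_relint (hpoly : IsRatPolyCone σ) {c : ℝ} (hc : 0 < c) {x : Euc n}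
    (hx : x ∈ intrinsicInterior ℝ σ) : c • x ∈ intrinsicInterior ℝ σ := by
  have h0 := ratPoly_zero_mem hpoly
  rw [mem_intrinsicInterior_iff] at hx ⊢
  obtain ⟨hxA, ε, hε, hball⟩ := hx
  refine ⟨(mem_affineSpan_iff_span h0).2
      (Submodule.smul_mem _ c ((mem_affineSpan_iff_span h0).1 hxA)), c * ε,
      by positivity, fun y hyA hd => ?_⟩
  have hy' : c⁻¹ • y ∈ σ := by
    apply hball
    · exact (mem_affineSpan_iff_span h0).2
        (Submodule.smul_mem _ c⁻¹ ((mem_affineSpan_iff_span h0).1 hyA))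
    · rw [dist_eq_norm] at hd ⊢
      have : c⁻¹ • y - x = c⁻¹ • (y - c • x) := by
        rw [smul_sub, smul_smul, inv_mul_cancel₀ hc.ne', one_smul]
      rw [this, norm_smul, Real.norm_eq_abs, abs_of_pos (inv_pos.2 hc)]
      calc c⁻¹ * ‖y - c • x‖ < c⁻¹ * (c * ε) := by
            apply mul_lt_mul_of_pos_left hd (inv_pos.2 hc)
        _ = ε := by field_simp
  have := ratPoly_smul_mem hpoly hc.le hy'
  rwa [smul_inv_smul₀ hc.ne'] at this

lemma exists_support (hpoly : IsRatPolyCone σ) {x : Euc n}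
    (hxσ : x ∈ σ) (hx : x ∉ intrinsicInterior ℝ σ) :
    ∃ u ∈ dualCone σ, ⟪u, x⟫ = 0 ∧ ∃ y ∈ σ, 0 < ⟪u, y⟫ := by
  classical
  have hconv := ratPoly_convex hpoly
  have h0 := ratPoly_zero_mem hpoly
  set V : Submodule ℝ (Euc n) := Submodule.span ℝ σ with hV
  set s : Set V := ((↑) ⁻¹' σ : Set V) with hs
  have hsconv : Convex ℝ s := hconv.linear_preimage V.subtype
  have hxV : x ∈ V := Submodule.subset_span hxσ
  set x' : V := ⟨x, hxV⟩ with hx'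
  -- a relative interior point
  obtain ⟨z, hz⟩ := Set.Nonempty.intrinsicInterior hconv ⟨0, h0⟩
  obtain ⟨hzA, ε₀, hε₀, hz0⟩ := mem_intrinsicInterior_iff.1 hz
  have hzσ : z ∈ σ := intrinsicInterior_subset hz
  have hzV : z ∈ V := Submodule.subset_span hzσ
  set z' : V := ⟨z, hzV⟩ with hz'
  have hdV : ∀ a b : V, dist a b = dist (a : Euc n) (b : Euc n) := fun a b => rfl
  have hzint : z' ∈ interior s := by
    rw [mem_interior_coe_iff hdV]
    exact ⟨ε₀, hε₀, fun y hy hd => hz0 y ((mem_affineSpan_iff_span h0).2 hy) hd⟩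
  have hxnot : x' ∉ interior s := by
    intro hmem
    apply hx
    rw [mem_intrinsicInterior_iff]
    obtain ⟨ε, hε, h⟩ := (mem_interior_coe_iff hdV).1 hmem
    exact ⟨subset_affineSpan ℝ σ hxσ, ε, hε,
      fun y hyA hd => h y ((mem_affineSpan_iff_span h0).1 hyA) hd⟩
  obtain ⟨f, hf⟩ := geometric_hahn_banach_open_point (hsconv.interior) isOpen_interior hxnot
  -- f ≤ f x' on all of s
  have hle : ∀ y ∈ s, f y ≤ f x' := by
    intro y hy
    have key : ∀ a : ℝ, 0 < a → a < 1 → f (a • z' + (1 - a) • y) < f x' := fun a ha0 ha1 =>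
      hf _ (hsconv.combo_interior_self_mem_interior hzint hy ha0 (by linarith) (by ring))
    have cont : Continuous fun a : ℝ => f (a • z' + (1 - a) • y) := by fun_prop
    have hlim : Filter.Tendsto (fun a : ℝ => f (a • z' + (1 - a) • y))
        (nhdsWithin 0 (Set.Ioi (0:ℝ))) (nhds (f y)) := by
      have h2 := (cont.tendsto 0).mono_left (nhdsWithin_le_nhds (s := Set.Ioi (0:ℝ)))
      simpa using h2
    refine le_of_tendsto hlim ?_
    have h1 : ∀ᶠ a in nhdsWithin 0 (Set.Ioi (0:ℝ)), a < 1 :=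
      mem_nhdsWithin_of_mem_nhds (eventually_lt_nhds zero_lt_one)
    filter_upwards [h1, self_mem_nhdsWithin] with a ha1 ha0
    exact (key a ha0 ha1).le
  have hmem_s : ∀ y (hy : y ∈ σ), (⟨y, Submodule.subset_span hy⟩ : V) ∈ s := fun y hy => hy
  have hfx_nonneg : (0:ℝ) ≤ f x' := by
    have h0s : (0 : V) ∈ s := by show ((0:V):Euc n) ∈ σ; simpa using h0
    have := hle 0 h0s
    simpa using this
  have hcone : ∀ y (hy : y ∈ σ), f ⟨y, Submodule.subset_span hy⟩ ≤ 0 := by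
    intro y hy
    by_contra hpos
    push_neg at hpos
    set t : ℝ := (f x' + 1) / f ⟨y, Submodule.subset_span hy⟩ with ht
    have ht0 : 0 < t := div_pos (by linarith) hpos
    have hty : t • y ∈ σ := ratPoly_smul_mem hpoly ht0.le hy
    have h2 := hle _ (hmem_s _ hty)
    have h3 : (⟨t • y, Submodule.subset_span hty⟩ : V) = t • ⟨y, Submodule.subset_span hy⟩ :=
      rfl
    rw [h3, map_smul, smul_eq_mul, ht, div_mul_cancel₀ _ hpos.ne'] at h2
    linarith
  have hfx0 : f x' = 0 := le_antisymm (hcone x hxσ) hfx_nonneg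
  -- turn f into a vector
  set w : V := (InnerProductSpace.toDual ℝ V).symm f with hw
  have hwinner : ∀ y : V, ⟪(w : Euc n), (y : Euc n)⟫ = f y := by
    intro y
    rw [← Submodule.coe_inner]
    exact InnerProductSpace.toDual_symm_apply
  refine ⟨-(w : Euc n), ?_, ?_, z, hzσ, ?_⟩
  · intro y hy
    rw [inner_neg_left]
    have := hcone y hy
    rw [← hwinner ⟨y, Submodule.subset_span hy⟩] at this
    simpa using this
  · rw [inner_neg_left]
    have := hwinner x'
    rw [hfx0] at this
    simpa using this
  · rw [inner_neg_left]
    have hlt : f z' < f x' := hf _ hzint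
    rw [hfx0] at hlt
    rw [← hwinner z'] at hlt
    simpa using hlt

lemma face_eq_self_of_relint {u x : Euc n} (hu : u ∈ dualCone σ)
    (hx : x ∈ intrinsicInterior ℝ σ) (hux : ⟪u, x⟫ = 0) :
    σ ∩ {z | ⟪u, z⟫ = 0} = σ :=
  Set.inter_eq_left.2 fun z hz => inner_eq_zero_of_relint hu hx hux hz

lemma exists_relint_sphere (hpoly : IsRatPolyCone σ) (hsc : IsStrictlyConvexCone σ)
    (hne : σ ≠ {0}) : ∃ x ∈ intrinsicInterior ℝ σ, ‖x‖ = 1 := by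
  have h0 := ratPoly_zero_mem hpoly
  obtain ⟨x, hx⟩ := Set.Nonempty.intrinsicInterior (ratPoly_convex hpoly) ⟨0, h0⟩
  have hx0 : x ≠ 0 := by
    rintro rfl
    apply hne
    apply Set.eq_singleton_iff_unique_mem.2 ⟨h0, ?_⟩
    intro y hy
    obtain ⟨hA, ε, hε, hball⟩ := mem_intrinsicInterior_iff.1 hx
    set δ : ℝ := ε / (2 * (‖y‖ + 1)) with hδdef
    have hδ : 0 < δ := by have := norm_nonneg y; positivity
    have hmem : -(δ • y) ∈ σ := by
      apply hball
      · have := AffineSubspace.smul_vsub_vadd_mem (affineSpan ℝ σ) δ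
          (subset_affineSpan ℝ σ h0) (subset_affineSpan ℝ σ hy) (subset_affineSpan ℝ σ h0)
        simpa [vsub_eq_sub, vadd_eq_add, smul_sub] using this
      · rw [dist_eq_norm]
        simp only [sub_zero, norm_neg, norm_smul, Real.norm_eq_abs, abs_of_pos hδ]
        have h1 : δ * ‖y‖ ≤ δ * (‖y‖ + 1) := by nlinarith [hδ.le]
        have h2 : δ * (‖y‖ + 1) = ε / 2 := by rw [hδdef]; field_simp
        linarith
    have hmem2 : δ • y ∈ σ := ratPoly_smul_mem hpoly hδ.le hy
    have : δ • y ∈ σ ∩ (-σ) := ⟨hmem2, by simpa [Set.mem_neg] using hmem⟩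
    rw [hsc] at this
    have := Set.mem_singleton_iff.1 this
    rcases smul_eq_zero.1 this with h | h
    · exact absurd h hδ.ne'
    · exact h
  have hnx : (0:ℝ) < ‖x‖ := norm_pos_iff.2 hx0
  refine ⟨‖x‖⁻¹ • x, smul_mem_relint hpoly (by positivity) hx, ?_⟩
  rw [norm_smul, Real.norm_eq_abs, abs_of_pos (by positivity)]
  field_simp

lemma covering {Δ : Set (Set (Euc n))} (hΔ : IsFan Δ) :
    ∀ σ ∈ Δ, ∀ x ∈ σ, ∃ τ ∈ Δ, x ∈ intrinsicInterior ℝ τ := by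
  suffices H : ∀ d : ℕ, ∀ σ ∈ Δ, coneDim σ < d → ∀ x ∈ σ, ∃ τ ∈ Δ, x ∈ intrinsicInterior ℝ τ by
    intro σ hσ x hx
    exact H (coneDim σ + 1) σ hσ (Nat.lt_succ_self _) x hx
  intro d
  induction d with
  | zero => intro σ hσ hd; omega
  | succ d ih =>
    intro σ hσ hd x hx
    by_cases hri : x ∈ intrinsicInterior ℝ σ
    · exact ⟨σ, hσ, hri⟩
    · obtain ⟨u, hu, hux, y, hyσ, hy⟩ := exists_support (hΔ.poly σ hσ) hx hri
      set F := σ ∩ {z | ⟪u, z⟫ = 0} with hF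
      have hFΔ : F ∈ Δ := hΔ.face_mem σ hσ F ⟨u, hu, rfl⟩
      have hxF : x ∈ F := ⟨hx, hux⟩
      have hspan : Submodule.span ℝ F < Submodule.span ℝ σ := by
        refine lt_of_le_of_ne (Submodule.span_mono Set.inter_subset_left) ?_
        intro heq
        have hker : Submodule.span ℝ F ≤ LinearMap.ker (innerSL ℝ u).toLinearMap := by
          rw [Submodule.span_le]
          intro z hz
          exact hz.2
        have hyF : y ∈ Submodule.span ℝ F := heq ▸ Submodule.subset_span hyσ
        have : ⟪u, y⟫ = 0 := hker hyF
        linarith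
      have hdF : coneDim F < coneDim σ := Submodule.finrank_lt_finrank_of_lt hspan
      exact ih F hFΔ (by omega) x hxF

end Helpers

/-- For a complete fan `Δ` in `ℝ^n` (`n ≥ 1`), the cells
`e_σ = σ ∩ S` form a cellular decomposition of the unit sphere `S`:
(i) the relative interiors of the nonzero cones meet `S` in nonempty sets,
pairwise disjoint for distinct cones, covering `S`; (ii) the boundary
`(σ ∩ S) ∖ relint σ` of a cell is the union of the cells of the nonzero
proper faces of `σ`. -/
theorem fan_cells_decompose_sphere {n : ℕ} (hn : 1 ≤ n)
    (Δ : Set (Set (Euc n))) (hΔ : IsCompleteFan Δ) :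
    ((∀ σ ∈ Δ, σ ≠ {0} →
        (intrinsicInterior ℝ σ ∩ Metric.sphere (0 : Euc n) 1).Nonempty) ∧
      (∀ σ ∈ Δ, ∀ τ ∈ Δ, σ ≠ {0} → τ ≠ {0} → σ ≠ τ →
        (intrinsicInterior ℝ σ ∩ Metric.sphere (0 : Euc n) 1) ∩
          (intrinsicInterior ℝ τ ∩ Metric.sphere (0 : Euc n) 1) = ∅) ∧
      (⋃ σ ∈ {σ | σ ∈ Δ ∧ σ ≠ ({0} : Set (Euc n))},
          intrinsicInterior ℝ σ ∩ Metric.sphere (0 : Euc n) 1) =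
        Metric.sphere (0 : Euc n) 1) ∧
    (∀ σ ∈ Δ, σ ≠ {0} →
      (σ ∩ Metric.sphere (0 : Euc n) 1) \ intrinsicInterior ℝ σ =
        ⋃ τ ∈ {τ | IsFaceOf τ σ ∧ τ ≠ σ ∧ τ ≠ ({0} : Set (Euc n))},
          τ ∩ Metric.sphere (0 : Euc n) 1) := by
  obtain ⟨hfan, hcomp⟩ := hΔ
  refine ⟨⟨?_, ?_, ?_⟩, ?_⟩
  · -- nonemptiness
    intro σ hσ hne
    obtain ⟨x, hx, hnorm⟩ :=
      exists_relint_sphere (hfan.poly σ hσ) (hfan.strictconv σ hσ) hne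
    exact ⟨x, hx, by simpa [mem_sphere_zero_iff_norm] using hnorm⟩
  · -- disjointness
    intro σ hσ τ hτ hσ0 hτ0 hστ
    rw [Set.eq_empty_iff_forall_notMem]
    rintro x ⟨⟨hxσ, -⟩, ⟨hxτ, -⟩⟩
    apply hστ
    have hxστ : x ∈ σ ∩ τ := ⟨intrinsicInterior_subset hxσ, intrinsicInterior_subset hxτ⟩
    obtain ⟨hf1, hf2⟩ := hfan.inter_face σ hσ τ hτ
    obtain ⟨u, hu, hueq⟩ := hf1
    obtain ⟨v, hv, hveq⟩ := hf2
    have hux : ⟪u, x⟫ = 0 := (hueq ▸ hxστ).2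
    have hvx : ⟪v, x⟫ = 0 := (hveq ▸ hxστ).2
    have h1 : σ ∩ τ = σ := by rw [hueq]; exact face_eq_self_of_relint hu hxσ hux
    have h2 : σ ∩ τ = τ := by rw [hveq]; exact face_eq_self_of_relint hv hxτ hvx
    rw [← h1, h2]
  · -- covering
    ext x
    simp only [Set.mem_iUnion, Set.mem_setOf_eq, Set.mem_inter_iff]
    constructor
    · rintro ⟨σ, ⟨hσ, -⟩, -, hxS⟩
      exact hxS
    · intro hxS
      have hxu : x ∈ ⋃₀ Δ := by rw [hcomp]; trivial
      obtain ⟨σ₀, hσ₀, hxσ₀⟩ := hxu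
      obtain ⟨τ, hτ, hxτ⟩ := covering hfan σ₀ hσ₀ x hxσ₀
      have hx0 : x ≠ 0 := by
        intro h
        rw [mem_sphere_zero_iff_norm, h, norm_zero] at hxS
        exact one_ne_zero hxS.symm
      refine ⟨τ, ⟨hτ, ?_⟩, hxτ, hxS⟩
      intro h
      have hxmem : x ∈ τ := intrinsicInterior_subset hxτ
      rw [h] at hxmem
      exact hx0 hxmem
  · -- boundary decomposition
    intro σ hσ hne
    ext x
    simp only [Set.mem_diff, Set.mem_inter_iff, Set.mem_iUnion, Set.mem_setOf_eq]
    constructor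
    · rintro ⟨⟨hxσ, hxS⟩, hxnot⟩
      obtain ⟨u, hu, hux, y, hyσ, hy⟩ := exists_support (hfan.poly σ hσ) hxσ hxnot
      refine ⟨σ ∩ {z | ⟪u, z⟫ = 0}, ⟨⟨u, hu, rfl⟩, ?_, ?_⟩, ⟨hxσ, hux⟩, hxS⟩
      · intro h
        have hyτ : y ∈ σ ∩ {z | ⟪u, z⟫ = 0} := by rw [h]; exact hyσ
        have := hyτ.2
        simp only [Set.mem_setOf_eq] at this
        linarith
      · intro h
        have hxτ : x ∈ ({0} : Set (Euc n)) := h ▸ (⟨hxσ, hux⟩ : x ∈ σ ∩ {z | ⟪u, z⟫ = 0})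
        rw [Set.mem_singleton_iff] at hxτ
        rw [mem_sphere_zero_iff_norm, hxτ, norm_zero] at hxS
        exact one_ne_zero hxS.symm
    · rintro ⟨τ, ⟨⟨u, hu, hueq⟩, hτσ, -⟩, hxτ, hxS⟩
      have hxστ : x ∈ σ ∩ {z | ⟪u, z⟫ = 0} := hueq ▸ hxτ
      refine ⟨⟨hxστ.1, hxS⟩, ?_⟩
      intro hri
      apply hτσ
      rw [hueq]
      exact face_eq_self_of_relint hu hri hxστ.2


end
end

section
/- Let Δ be a fan in ℝ^n and let τ₀ ⊊ τ₁ ⊊ ⋯ ⊊ τ_k be a flag in Δ with τ₀ ≠ {0}. Then the vectors v_{τ₀}, v_{τ₁}, …, v_{τ_k} are linearly independent in ℝ^n. -/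
open scoped RealInnerProductSpace

noncomputable section

/-- A flag `τ₀ ⊊ τ₁ ⊊ ⋯ ⊊ τ_k` of cones in the fan `Δ`, where each `τ_i`
is a proper face of `τ_{i+1}`. -/
def IsFlag {n : ℕ} (Δ : Set (Set (Euc n))) {k : ℕ} (τ : Fin (k + 1) → Set (Euc n)) : Prop :=
  (∀ i, τ i ∈ Δ) ∧
    ∀ i : Fin k, IsFaceOf (τ i.castSucc) (τ i.succ) ∧ τ i.castSucc ≠ τ i.succ

/-- `v_σ`: the sum of the unit vectors `u_ρ` over the one-dimensional cones
`ρ ∈ Δ` that are faces of `σ`; here `u : Set (Euc n) → Euc n` is a choice of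
the unit vector of each one-dimensional cone. -/
def vVec {n : ℕ} (Δ : Set (Set (Euc n))) (u : Set (Euc n) → Euc n)
    (σ : Set (Euc n)) : Euc n :=
  ∑ᶠ ρ ∈ {ρ | ρ ∈ Δ ∧ IsFaceOf ρ σ ∧ coneDim ρ = 1}, u ρ

/-- The choice function `u` assigns to every one-dimensional cone of `Δ` the
unique unit vector it contains. -/
def IsUnitVecChoice {n : ℕ} (Δ : Set (Set (Euc n))) (u : Set (Euc n) → Euc n) : Prop :=
  ∀ ρ ∈ Δ, coneDim ρ = 1 → u ρ ∈ ρ ∧ ‖u ρ‖ = 1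


-- ===== auxiliary development =====

namespace FanAux

variable {n m : ℕ}

def coneOf {n m : ℕ} (v : Fin m → Euc n) : Set (Euc n) :=
  {x | ∃ lam : Fin m → ℝ, (∀ i, 0 ≤ lam i) ∧ x = ∑ i, lam i • v i}

lemma isRatPolyCone_iff {σ : Set (Euc n)} :
    IsRatPolyCone σ ↔ ∃ (m : ℕ) (v : Fin m → Euc n), (∀ i, IsIntegralVec (v i)) ∧ σ = coneOf v :=
  Iff.rfl

lemma mem_coneOf (v : Fin m → Euc n) (i : Fin m) : v i ∈ coneOf v := by
  classical
  refine ⟨fun j => if j = i then 1 else 0, fun j => by positivity, ?_⟩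
  simp [ite_smul]

lemma zero_mem_coneOf (v : Fin m → Euc n) : (0 : Euc n) ∈ coneOf v :=
  ⟨0, fun _ => le_refl _, by simp⟩

lemma coneOf_smul_mem {v : Fin m → Euc n} {c : ℝ} (hc : 0 ≤ c) {x : Euc n}
    (hx : x ∈ coneOf v) : c • x ∈ coneOf v := by
  obtain ⟨lam, h0, rfl⟩ := hx
  exact ⟨fun t => c * lam t, fun t => mul_nonneg hc (h0 t),
    by rw [Finset.smul_sum]; exact Finset.sum_congr rfl fun t _ => (mul_smul c (lam t) (v t)).symm⟩

lemma coneOf_add_mem {v : Fin m → Euc n} {x y : Euc n}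
    (hx : x ∈ coneOf v) (hy : y ∈ coneOf v) : x + y ∈ coneOf v := by
  obtain ⟨lam, h0, rfl⟩ := hx
  obtain ⟨mu, h0', rfl⟩ := hy
  exact ⟨fun t => lam t + mu t, fun t => add_nonneg (h0 t) (h0' t),
    by rw [← Finset.sum_add_distrib]; exact Finset.sum_congr rfl fun t _ => (add_smul (lam t) (mu t) (v t)).symm⟩

lemma inner_sum_smul (w : Euc n) (lam : Fin m → ℝ) (v : Fin m → Euc n) :
    ⟪w, ∑ t, lam t • v t⟫ = ∑ t, lam t * ⟪w, v t⟫ := by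
  rw [inner_sum]
  exact Finset.sum_congr rfl fun t _ => real_inner_smul_right _ _ _

lemma inner_nonneg_coneOf {v : Fin m → Euc n} {u : Euc n}
    (h : ∀ t, 0 ≤ ⟪u, v t⟫) {x : Euc n} (hx : x ∈ coneOf v) : 0 ≤ ⟪u, x⟫ := by
  obtain ⟨lam, h0, rfl⟩ := hx
  rw [inner_sum_smul]
  exact Finset.sum_nonneg fun t _ => mul_nonneg (h0 t) (h t)

lemma inner_pos_coneOf {v : Fin m → Euc n} {u : Euc n}
    (h : ∀ t, v t ≠ 0 → 0 < ⟪u, v t⟫) {x : Euc n} (hx : x ∈ coneOf v) (hx0 : x ≠ 0) :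
    0 < ⟪u, x⟫ := by
  obtain ⟨lam, h0, rfl⟩ := hx
  rw [inner_sum_smul]
  have hex : ∃ t, lam t • v t ≠ 0 := by
    by_contra h'
    push_neg at h'
    exact hx0 (Finset.sum_eq_zero fun t _ => h' t)
  obtain ⟨t, ht⟩ := hex
  have hvt : v t ≠ 0 := fun hv => ht (by simp [hv])
  have hlt : 0 < lam t := lt_of_le_of_ne (h0 t) (fun hl => ht (by simp [← hl]))
  refine Finset.sum_pos' (fun t' _ => ?_) ⟨t, Finset.mem_univ t, mul_pos hlt (h t hvt)⟩
  by_cases hv : v t' = 0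
  · simp [hv]
  · exact mul_nonneg (h0 t') (le_of_lt (h t' hv))

end FanAux

-- chunk B: faces, span, dimension
namespace FanAux
variable {n m : ℕ}

lemma isFaceOf_self (σ : Set (Euc n)) : IsFaceOf σ σ := by
  refine ⟨0, fun x _ => by simp, ?_⟩
  ext x
  simp

lemma _root_.IsFaceOf.subset {τ σ : Set (Euc n)} (h : IsFaceOf τ σ) : τ ⊆ σ := by
  obtain ⟨u, _, rfl⟩ := h
  exact Set.inter_subset_left

lemma isFaceOf_trans {σ τ ρ : Set (Euc n)} (hσ : IsRatPolyCone σ)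
    (hτσ : IsFaceOf τ σ) (hρτ : IsFaceOf ρ τ) : IsFaceOf ρ σ := by
  classical
  obtain ⟨m, v, -, rfl⟩ := hσ
  obtain ⟨a, ha, hτ⟩ := hτσ
  obtain ⟨b, hb, hρ⟩ := hρτ
  -- choose N with ∀ t, 0 ≤ N * ⟪a, v t⟫ + ⟪b, v t⟫
  obtain ⟨M, hM⟩ := Finset.exists_le
    (Finset.univ.image fun t => (-(⟪b, v t⟫ : ℝ)) / ⟪a, v t⟫)
  set N : ℝ := max M 0 with hN
  have hNt : ∀ t, 0 ≤ N * ⟪a, v t⟫ + ⟪b, v t⟫ := by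
    intro t
    have hav : 0 ≤ ⟪a, v t⟫ := ha (v t) (mem_coneOf v t)
    rcases lt_or_eq_of_le hav with hpos | hzero
    · have h1 : (-(⟪b, v t⟫ : ℝ)) / ⟪a, v t⟫ ≤ M :=
        hM _ (Finset.mem_image_of_mem _ (Finset.mem_univ t))
      have h2 : (-(⟪b, v t⟫ : ℝ)) / ⟪a, v t⟫ ≤ N := le_trans h1 (le_max_left _ _)
      rw [div_le_iff₀ hpos] at h2
      nlinarith
    · have hvτ : v t ∈ τ := by
        rw [hτ]
        exact ⟨mem_coneOf v t, hzero.symm⟩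
      have h3 := hb (v t) hvτ
      rw [← hzero, mul_zero, zero_add]
      exact h3
  have hdNab : ∀ x ∈ coneOf v, (0:ℝ) ≤ ⟪N • a + b, x⟫ := by
    intro x hx
    refine inner_nonneg_coneOf (fun t => ?_) hx
    rw [inner_add_left, real_inner_smul_left]
    exact hNt t
  refine ⟨a + (N • a + b), ?_, ?_⟩
  · intro x hx
    rw [inner_add_left]
    exact add_nonneg (ha x hx) (hdNab x hx)
  · ext x
    constructor
    · intro hxρ
      have hxτ : x ∈ τ := hρ ▸ hxρ |>.1
      have hxb : ⟪b, x⟫ = 0 := (hρ ▸ hxρ).2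
      have hxσ : x ∈ coneOf v := (hτ ▸ hxτ).1
      have hxa : ⟪a, x⟫ = 0 := (hτ ▸ hxτ).2
      refine ⟨hxσ, ?_⟩
      simp only [Set.mem_setOf_eq, inner_add_left, real_inner_smul_left]
      rw [hxa, hxb]; ring
    · rintro ⟨hxσ, hx0⟩
      simp only [Set.mem_setOf_eq, inner_add_left, real_inner_smul_left] at hx0
      have h1 : 0 ≤ ⟪a, x⟫ := ha x hxσ
      have h2 : 0 ≤ N * ⟪a, x⟫ + ⟪b, x⟫ := by
        have := hdNab x hxσ
        rwa [inner_add_left, real_inner_smul_left] at this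
      have hxa : ⟪a, x⟫ = 0 := by linarith
      have hxτ : x ∈ τ := by rw [hτ]; exact ⟨hxσ, hxa⟩
      have hmul : N * ⟪a, x⟫ = 0 := by rw [hxa, mul_zero]
      have hxb : ⟪b, x⟫ = 0 := by linarith
      rw [hρ]
      exact ⟨hxτ, hxb⟩

lemma span_coneOf (v : Fin m → Euc n) :
    Submodule.span ℝ (coneOf v) = Submodule.span ℝ (Set.range v) := by
  apply le_antisymm
  · rw [Submodule.span_le]
    rintro x ⟨lam, -, rfl⟩
    exact Submodule.sum_mem _ fun t _ =>
      Submodule.smul_mem _ _ (Submodule.subset_span ⟨t, rfl⟩)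
  · exact Submodule.span_mono (fun x ⟨t, ht⟩ => ht ▸ mem_coneOf v t)

lemma faceDim_lt {τ σ : Set (Euc n)} (hτσ : IsFaceOf τ σ) (hne : τ ≠ σ) :
    coneDim τ < coneDim σ := by
  have hsub := hτσ.subset
  have hle : Submodule.span ℝ τ ≤ Submodule.span ℝ σ := Submodule.span_mono hsub
  have hne' : Submodule.span ℝ τ ≠ Submodule.span ℝ σ := by
    intro heq
    obtain ⟨a, ha, hτ⟩ := hτσ
    have hz : ∀ x ∈ Submodule.span ℝ τ, ⟪a, x⟫ = 0 := by
      intro x hx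
      induction hx using Submodule.span_induction with
      | mem x hx => exact (hτ ▸ hx).2
      | zero => simp
      | add x y _ _ hx hy => rw [inner_add_right, hx, hy]; ring
      | smul c x _ hx => rw [real_inner_smul_right, hx]; ring
    apply hne
    apply Set.Subset.antisymm hsub
    intro x hx
    rw [hτ]
    exact ⟨hx, hz x (heq ▸ Submodule.subset_span hx)⟩
  exact Submodule.finrank_lt_finrank_of_lt (lt_of_le_of_ne hle hne')

lemma eq_singleton_of_coneDim_zero {σ : Set (Euc n)} (h0 : (0:Euc n) ∈ σ)
    (h : coneDim σ = 0) : σ = {0} := by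
  have hb : Submodule.span ℝ σ = ⊥ := Submodule.finrank_eq_zero.mp h
  apply Set.Subset.antisymm
  · intro x hx
    have hxs : x ∈ Submodule.span ℝ σ := Submodule.subset_span hx
    rw [hb, Submodule.mem_bot] at hxs
    exact hxs
  · intro x hx
    rw [Set.mem_singleton_iff] at hx
    exact hx ▸ h0

lemma exists_ne_zero_of_coneDim_ne_zero {σ : Set (Euc n)} (h : coneDim σ ≠ 0) :
    ∃ x ∈ σ, x ≠ 0 := by
  by_contra h'
  push_neg at h'
  apply h
  have : Submodule.span ℝ σ ≤ ⊥ := by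
    rw [Submodule.span_le]
    intro x hx
    simp [h' x hx]
  rw [coneDim, le_bot_iff.mp this]
  exact finrank_bot ℝ _

lemma smul_mem_of_ratPoly {ρ : Set (Euc n)} (h : IsRatPolyCone ρ) {c : ℝ} (hc : 0 ≤ c)
    {x : Euc n} (hx : x ∈ ρ) : c • x ∈ ρ := by
  obtain ⟨m, v, -, rfl⟩ := h
  exact coneOf_smul_mem hc hx

lemma add_mem_of_ratPoly {ρ : Set (Euc n)} (h : IsRatPolyCone ρ) {x y : Euc n}
    (hx : x ∈ ρ) (hy : y ∈ ρ) : x + y ∈ ρ := by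
  obtain ⟨m, v, -, rfl⟩ := h
  exact coneOf_add_mem hx hy

lemma zero_mem_of_ratPoly {ρ : Set (Euc n)} (h : IsRatPolyCone ρ) : (0 : Euc n) ∈ ρ := by
  obtain ⟨m, v, -, rfl⟩ := h
  exact zero_mem_coneOf v

lemma one_dim_inner_pos {ρ : Set (Euc n)} (hρ : IsRatPolyCone ρ)
    (hsc : IsStrictlyConvexCone ρ) (hdim : coneDim ρ = 1) {x z w : Euc n}
    (hx : x ∈ ρ) (hz : z ∈ ρ) (hz0 : z ≠ 0) (hpos : 0 < ⟪w, x⟫) : 0 < ⟪w, z⟫ := by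
  have hle : Submodule.span ℝ ({z} : Set (Euc n)) ≤ Submodule.span ℝ ρ :=
    Submodule.span_mono (Set.singleton_subset_iff.mpr hz)
  have heq : Submodule.span ℝ ({z} : Set (Euc n)) = Submodule.span ℝ ρ := by
    apply le_antisymm hle
    have h1 : Module.finrank ℝ (Submodule.span ℝ ({z} : Set (Euc n))) = 1 :=
      finrank_span_singleton hz0
    have := Submodule.eq_of_le_of_finrank_le hle (by rw [h1]; exact le_of_eq hdim)
    exact le_of_eq this.symm
  have hxz : x ∈ Submodule.span ℝ ({z} : Set (Euc n)) := heq ▸ Submodule.subset_span hx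
  rw [Submodule.mem_span_singleton] at hxz
  obtain ⟨a, rfl⟩ := hxz
  rcases le_or_gt a 0 with ha | ha
  · exfalso
    have hmem : a • z ∈ ρ ∩ (-ρ) := by
      constructor
      · exact hx
      · rw [Set.mem_neg, ← neg_smul]
        exact smul_mem_of_ratPoly hρ (by linarith) hz
    rw [hsc, Set.mem_singleton_iff] at hmem
    rw [hmem] at hpos
    simp at hpos
  · rw [real_inner_smul_right] at hpos
    nlinarith

end FanAux

-- chunk C: positive functional, cut lemma
namespace FanAux
variable {n m : ℕ}

lemma strictconv_of_subset {S T : Set (Euc n)} (hST : S ⊆ T)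
    (hT : IsStrictlyConvexCone T) (h0 : (0:Euc n) ∈ S) : IsStrictlyConvexCone S := by
  apply Set.Subset.antisymm
  · intro x hx
    have : x ∈ T ∩ (-T) := ⟨hST hx.1, Set.neg_subset_neg.mpr hST hx.2⟩
    rw [hT] at this
    exact this
  · intro x hx
    rw [Set.mem_singleton_iff] at hx
    subst hx
    exact ⟨h0, by rw [Set.mem_neg, neg_zero]; exact h0⟩

lemma exists_pos_inner (v : Fin m → Euc n) (hsc : IsStrictlyConvexCone (coneOf v)) :
    ∃ u : Euc n, ∀ t, v t ≠ 0 → 0 < ⟪u, v t⟫ := by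
  classical
  by_cases hall : ∀ t, v t = 0
  · exact ⟨0, fun t ht => absurd (hall t) ht⟩
  set s : Finset (Euc n) := (Finset.univ.filter fun t => v t ≠ 0).image v with hs
  have hmems : ∀ y ∈ s, y ∈ coneOf v ∧ y ≠ 0 := by
    intro y hy
    rw [hs, Finset.mem_image] at hy
    obtain ⟨t, htf, rfl⟩ := hy
    rw [Finset.mem_filter] at htf
    exact ⟨mem_coneOf v t, htf.2⟩
  have h0 : (0 : Euc n) ∉ convexHull ℝ (s : Set (Euc n)) := by
    intro hmem
    rw [Finset.convexHull_eq] at hmem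
    obtain ⟨wt, hw0, hw1, hwc⟩ := hmem
    rw [Finset.centerMass_eq_of_sum_1 _ _ hw1] at hwc
    simp only [id] at hwc
    have hy0 : ∃ y ∈ s, 0 < wt y := by
      by_contra h
      push_neg at h
      have : ∑ y ∈ s, wt y = 0 :=
        Finset.sum_eq_zero fun y hy => le_antisymm (h y hy) (hw0 y hy)
      rw [hw1] at this
      norm_num at this
    obtain ⟨y0, hy0s, hy0⟩ := hy0
    have hsplit : wt y0 • y0 + ∑ y ∈ s.erase y0, wt y • y = 0 :=
      (Finset.add_sum_erase s (fun y => wt y • y) hy0s).trans hwc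
    have h1 : wt y0 • y0 ∈ coneOf v :=
      coneOf_smul_mem (le_of_lt hy0) (hmems y0 hy0s).1
    have h2 : ∑ y ∈ s.erase y0, wt y • y ∈ coneOf v := by
      apply Finset.sum_induction _ (fun a => a ∈ coneOf v) (fun a b => coneOf_add_mem) (zero_mem_coneOf v)
      intro y hy
      exact coneOf_smul_mem (hw0 y (Finset.erase_subset _ _ hy)) (hmems y (Finset.erase_subset _ _ hy)).1
    have hmem2 : wt y0 • y0 ∈ coneOf v ∩ (-(coneOf v)) := by
      refine ⟨h1, ?_⟩
      rw [Set.mem_neg]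
      have hneg : -(wt y0 • y0) = ∑ y ∈ s.erase y0, wt y • y :=
        neg_eq_of_add_eq_zero_right hsplit
      rw [hneg]
      exact h2
    rw [hsc, Set.mem_singleton_iff] at hmem2
    have := (hmems y0 hy0s).2
    rw [smul_eq_zero] at hmem2
    rcases hmem2 with h | h
    · exact absurd h (ne_of_gt hy0)
    · exact this h
  obtain ⟨f, c, hf0, hfb⟩ := geometric_hahn_banach_point_closed
    (convex_convexHull ℝ _) ((s.finite_toSet.isCompact_convexHull ℝ).isClosed) h0
  refine ⟨(InnerProductSpace.toDual ℝ (Euc n)).symm f, fun t ht => ?_⟩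
  have hmem : v t ∈ convexHull ℝ (s : Set (Euc n)) := by
    apply subset_convexHull
    rw [hs]
    simp only [Finset.coe_image, Set.mem_image, Finset.mem_coe, Finset.mem_filter]
    exact ⟨t, by simp [ht], rfl⟩
  have hb := hfb _ hmem
  have hf00 : f 0 = 0 := map_zero f
  rw [InnerProductSpace.toDual_symm_apply]
  linarith

lemma cut (v : Fin m → Euc n) (u w' : Euc n) (hu : ∀ t, v t ≠ 0 → 0 < ⟪u, v t⟫)
    (hex : ∃ t, v t ≠ 0) :
    ∃ (v' : Fin m → Euc n) (c : ℝ),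
      IsFaceOf (coneOf v') (coneOf v) ∧
      (∀ t, v' t = v t ∨ v' t = 0) ∧
      (∃ t, v t ≠ 0 ∧ v' t = v t) ∧
      (∀ t, v t ≠ 0 → ⟪w', v t⟫ ≤ c * ⟪u, v t⟫) ∧
      (∀ x ∈ coneOf v', ⟪w', x⟫ = c * ⟪u, x⟫) := by
  classical
  set s := Finset.univ.filter (fun t => v t ≠ 0) with hsdef
  have hs : s.Nonempty := by
    obtain ⟨t, ht⟩ := hex
    exact ⟨t, by simp [hsdef, ht]⟩
  obtain ⟨t₀, ht₀s, hmax⟩ := Finset.exists_max_image s (fun t => ⟪w', v t⟫ / ⟪u, v t⟫) hs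
  have hvt₀ : v t₀ ≠ 0 := by
    rw [hsdef, Finset.mem_filter] at ht₀s
    exact ht₀s.2
  set c := ⟪w', v t₀⟫ / ⟪u, v t₀⟫ with hc
  set u₁ := c • u - w' with hu₁
  have hinner : ∀ y : Euc n, ⟪u₁, y⟫ = c * ⟪u, y⟫ - ⟪w', y⟫ := by
    intro y
    rw [hu₁, inner_sub_left, real_inner_smul_left]
  have hmax' : ∀ t, v t ≠ 0 → ⟪w', v t⟫ ≤ c * ⟪u, v t⟫ := by
    intro t ht
    have h1 : ⟪w', v t⟫ / ⟪u, v t⟫ ≤ c := hmax t (by simp [hsdef, ht])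
    rw [div_le_iff₀ (hu t ht)] at h1
    linarith [h1]
  have hkey : ∀ t, 0 ≤ ⟪u₁, v t⟫ := by
    intro t
    rw [hinner]
    by_cases h : v t = 0
    · simp [h]
    · linarith [hmax' t h]
  have ht₀0 : ⟪u₁, v t₀⟫ = 0 := by
    rw [hinner, hc, div_mul_cancel₀ _ (ne_of_gt (hu t₀ hvt₀))]
    ring
  set v' : Fin m → Euc n := fun t => if ⟪u₁, v t⟫ = 0 then v t else 0 with hv'
  have hv'val : ∀ t, v' t = if ⟪u₁, v t⟫ = 0 then v t else 0 := fun t => rfl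
  have hv'cases : ∀ t, v' t = v t ∨ v' t = 0 := by
    intro t
    rw [hv'val t]
    by_cases h : ⟪u₁, v t⟫ = 0
    · exact Or.inl (if_pos h)
    · exact Or.inr (if_neg h)
  have hinner0 : ∀ t, ⟪u₁, v' t⟫ = 0 := by
    intro t
    rw [hv'val t]
    by_cases h : ⟪u₁, v t⟫ = 0
    · rw [if_pos h]; exact h
    · rw [if_neg h]; exact inner_zero_right u₁
  have hwc : ∀ t, ⟪w', v' t⟫ = c * ⟪u, v' t⟫ := by
    intro t
    have := hinner (v' t)
    rw [hinner0 t] at this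
    linarith
  have hface : IsFaceOf (coneOf v') (coneOf v) := by
    refine ⟨u₁, fun x hx => inner_nonneg_coneOf hkey hx, ?_⟩
    ext x
    constructor
    · rintro ⟨lam, h0, rfl⟩
      constructor
      · refine ⟨fun t => if ⟪u₁, v t⟫ = 0 then lam t else 0, fun t => ?_, ?_⟩
        · beta_reduce
          by_cases h : ⟪u₁, v t⟫ = 0
          · rw [if_pos h]; exact h0 t
          · rw [if_neg h]
        · apply Finset.sum_congr rfl
          intro t _
          beta_reduce
          rw [hv'val t]
          by_cases h : ⟪u₁, v t⟫ = 0
          · rw [if_pos h, if_pos h]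
          · rw [if_neg h, if_neg h, smul_zero, zero_smul]
      · show ⟪u₁, _⟫ = 0
        rw [inner_sum_smul]
        exact Finset.sum_eq_zero fun t _ => by rw [hinner0 t, mul_zero]
    · rintro ⟨⟨lam, h0, rfl⟩, hx0⟩
      have hx0' : ∑ t, lam t * ⟪u₁, v t⟫ = 0 := by
        rw [← inner_sum_smul]
        exact hx0
      have hterm : ∀ t ∈ Finset.univ, lam t * ⟪u₁, v t⟫ = 0 :=
        (Finset.sum_eq_zero_iff_of_nonneg
          (fun t _ => mul_nonneg (h0 t) (hkey t))).mp hx0'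
      refine ⟨lam, h0, ?_⟩
      apply Finset.sum_congr rfl
      intro t _
      rw [hv'val t]
      by_cases h : ⟪u₁, v t⟫ = 0
      · rw [if_pos h]
      · have hlam : lam t = 0 := by
          have := hterm t (Finset.mem_univ t)
          rcases mul_eq_zero.mp this with h' | h'
          · exact h'
          · exact absurd h' h
        rw [if_neg h, hlam, zero_smul, zero_smul]
  refine ⟨v', c, hface, hv'cases, ⟨t₀, hvt₀, by rw [hv'val t₀]; exact if_pos ht₀0⟩, hmax', ?_⟩
  rintro x ⟨lam, h0, rfl⟩
  rw [inner_sum_smul, inner_sum_smul, Finset.mul_sum]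
  apply Finset.sum_congr rfl
  intro t _
  rw [hwc t]
  ring

end FanAux

-- chunk D: existence of one-dimensional faces
namespace FanAux
variable {n : ℕ}

lemma ratPoly_of_sub {m : ℕ} {v v' : Fin m → Euc n} (hint : ∀ i, IsIntegralVec (v i))
    (hsub : ∀ t, v' t = v t ∨ v' t = 0) : IsRatPolyCone (coneOf v') := by
  refine ⟨m, v', fun t => ?_, rfl⟩
  rcases hsub t with h | h
  · rw [h]; exact hint t
  · rw [h]; exact fun i => ⟨0, by simp⟩

lemma exists_one_dim_face : ∀ (d : ℕ) (σ : Set (Euc n)), coneDim σ = d →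
    IsRatPolyCone σ → IsStrictlyConvexCone σ → σ ≠ {0} →
    ∃ ρ, IsFaceOf ρ σ ∧ coneDim ρ = 1 := by
  intro d
  induction d using Nat.strong_induction_on with
  | _ d IH =>
  intro σ hd hpoly hsc hne
  by_cases hd0 : d = 0
  · subst hd0
    exact absurd (eq_singleton_of_coneDim_zero (zero_mem_of_ratPoly hpoly) hd) hne
  by_cases hd1 : d = 1
  · subst hd1
    exact ⟨σ, isFaceOf_self σ, hd⟩
  · obtain ⟨m, v, hint, rfl⟩ := hpoly
    obtain ⟨u, hu⟩ := exists_pos_inner v hsc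
    have hrank : Module.finrank ℝ (Submodule.span ℝ (Set.range v)) = d := by
      rw [← span_coneOf]; exact hd
    have ha : ∃ a, v a ≠ 0 := by
      by_contra h
      push_neg at h
      have : Submodule.span ℝ (Set.range v) ≤ ⊥ := by
        rw [Submodule.span_le]
        rintro x ⟨t, rfl⟩
        simp [h t]
      rw [le_bot_iff.mp this, finrank_bot] at hrank
      exact hd0 hrank.symm
    obtain ⟨a, hva⟩ := ha
    have hb : ∃ b, v b ∉ (Submodule.span ℝ ({v a} : Set (Euc n))) := by
      by_contra h
      push_neg at h
      have hle : Submodule.span ℝ (Set.range v) ≤ Submodule.span ℝ ({v a} : Set (Euc n)) := by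
        rw [Submodule.span_le]
        rintro x ⟨t, rfl⟩
        exact h t
      have h1 : Module.finrank ℝ (Submodule.span ℝ ({v a} : Set (Euc n))) = 1 :=
        finrank_span_singleton hva
      have := Submodule.finrank_mono hle
      rw [h1, hrank] at this
      interval_cases d
      · exact hd0 rfl
      · exact hd1 rfl
    obtain ⟨b, hvb⟩ := hb
    have hvb0 : v b ≠ 0 := by
      intro h
      exact hvb (h ▸ Submodule.zero_mem _)
    set pa := (⟪u, v a⟫)⁻¹ • v a with hpa
    set pb := (⟪u, v b⟫)⁻¹ • v b with hpb
    have hua := hu a hva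
    have hub := hu b hvb0
    have hpab : pa ≠ pb := by
      intro h
      apply hvb
      have : v b = ⟪u, v b⟫ • pb := by
        rw [hpb, smul_inv_smul₀ (ne_of_gt hub)]
      rw [this, ← h, hpa]
      exact Submodule.smul_mem _ _ (Submodule.smul_mem _ _ (Submodule.mem_span_singleton_self _))
    set w' := pa - pb with hw'
    obtain ⟨v', c, hface, hsub', ⟨t₁, ht₁0, ht₁⟩, hmaxp, heq⟩ := cut v u w' hu ⟨a, hva⟩
    have hFpoly : IsRatPolyCone (coneOf v') := ratPoly_of_sub hint hsub'
    have hFsc : IsStrictlyConvexCone (coneOf v') :=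
      strictconv_of_subset hface.subset hsc (zero_mem_coneOf v')
    have hFne : coneOf v' ≠ {0} := by
      intro h
      have : v' t₁ ∈ coneOf v' := mem_coneOf v' t₁
      rw [h, Set.mem_singleton_iff, ht₁] at this
      exact ht₁0 this
    have hFneσ : coneOf v' ≠ coneOf v := by
      intro h
      have hva' : v a ∈ coneOf v' := h ▸ mem_coneOf v a
      have hvb' : v b ∈ coneOf v' := h ▸ mem_coneOf v b
      have e1 := heq _ hva'
      have e2 := heq _ hvb'
      have hwpa : ⟪w', pa⟫ = c := by
        rw [hpa, real_inner_smul_right, e1, mul_comm c]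
        exact inv_mul_cancel_left₀ (ne_of_gt hua) c
      have hwpb : ⟪w', pb⟫ = c := by
        rw [hpb, real_inner_smul_right, e2, mul_comm c]
        exact inv_mul_cancel_left₀ (ne_of_gt hub) c
      have : ⟪w', w'⟫ = 0 := by
        rw [hw', inner_sub_right, hwpa, hwpb, sub_self]
      rw [inner_self_eq_zero] at this
      rw [hw', sub_eq_zero] at this
      exact hpab this
    have hdimlt : coneDim (coneOf v') < d := hd ▸ faceDim_lt hface hFneσ
    obtain ⟨ρ, hρ, hρ1⟩ := IH (coneDim (coneOf v')) hdimlt (coneOf v') rfl hFpoly hFsc hFne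
    exact ⟨ρ, isFaceOf_trans ⟨m, v, hint, rfl⟩ hface hρ, hρ1⟩

lemma exists_ray_pos {σ : Set (Euc n)} (hpoly : IsRatPolyCone σ)
    (hsc : IsStrictlyConvexCone σ) {w : Euc n} (hw : w ∈ dualCone σ)
    {x : Euc n} (hx : x ∈ σ) (hxw : 0 < ⟪w, x⟫) :
    ∃ ρ, IsFaceOf ρ σ ∧ coneDim ρ = 1 ∧ ∃ y ∈ ρ, 0 < ⟪w, y⟫ := by
  obtain ⟨m, v, hint, rfl⟩ := hpoly
  obtain ⟨u, hu⟩ := exists_pos_inner v hsc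
  obtain ⟨lam, hlam, rfl⟩ := hx
  have hterm : ∃ t, 0 < lam t * ⟪w, v t⟫ := by
    by_contra h
    push_neg at h
    rw [inner_sum_smul] at hxw
    have := Finset.sum_nonpos (fun t (_ : t ∈ Finset.univ) => h t)
    linarith
  obtain ⟨t₂, ht₂⟩ := hterm
  have hwv : 0 < ⟪w, v t₂⟫ := by
    rcases lt_or_ge 0 (⟪w, v t₂⟫ : ℝ) with h | h
    · exact h
    · nlinarith [hlam t₂]
  have hvt₂ : v t₂ ≠ 0 := by
    intro h
    rw [h, inner_zero_right] at hwv
    exact lt_irrefl 0 hwv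
  obtain ⟨v', c, hface, hsub', ⟨t₁, ht₁0, ht₁⟩, hmaxp, heq⟩ := cut v u w hu ⟨t₂, hvt₂⟩
  have hc : 0 < c := by
    have h1 := hmaxp t₂ hvt₂
    have h2 := hu t₂ hvt₂
    nlinarith
  have hFpoly : IsRatPolyCone (coneOf v') := ratPoly_of_sub hint hsub'
  have hFsc : IsStrictlyConvexCone (coneOf v') :=
    strictconv_of_subset hface.subset hsc (zero_mem_coneOf v')
  have hFne : coneOf v' ≠ {0} := by
    intro h
    have : v' t₁ ∈ coneOf v' := mem_coneOf v' t₁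
    rw [h, Set.mem_singleton_iff, ht₁] at this
    exact ht₁0 this
  obtain ⟨ρ, hρF, hρ1⟩ := exists_one_dim_face (coneDim (coneOf v')) (coneOf v') rfl
    hFpoly hFsc hFne
  have hρσ := isFaceOf_trans ⟨m, v, hint, rfl⟩ hface hρF
  obtain ⟨y, hyρ, hy0⟩ := exists_ne_zero_of_coneDim_ne_zero (by rw [hρ1]; omega)
  have hyF : y ∈ coneOf v' := hρF.subset hyρ
  have heqy := heq y hyF
  have hu' : ∀ t, v' t ≠ 0 → 0 < ⟪u, v' t⟫ := by
    intro t ht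
    rcases hsub' t with h | h
    · rw [h] at ht ⊢
      exact hu t ht
    · exact absurd h ht
  have hyu : 0 < ⟪u, y⟫ := inner_pos_coneOf hu' hyF hy0
  exact ⟨ρ, hρσ, hρ1, y, hyρ, by rw [heqy]; positivity⟩

end FanAux

open FanAux

/-- For a flag `τ₀ ⊊ τ₁ ⊊ ⋯ ⊊ τ_k` in a fan `Δ` with
`τ₀ ≠ {0}`, the vectors `v_{τ₀}, …, v_{τ_k}` are linearly independent. -/
theorem flag_vVec_linearIndependent {n k : ℕ}
    (Δ : Set (Set (Euc n))) (hΔ : IsFan Δ)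
    (u : Set (Euc n) → Euc n) (hu : IsUnitVecChoice Δ u)
    (τ : Fin (k + 1) → Set (Euc n)) (hflag : IsFlag Δ τ)
    (h0 : τ 0 ≠ ({0} : Set (Euc n))) :
    LinearIndependent ℝ fun i => vVec Δ u (τ i) := by
  classical
  obtain ⟨hmem, hstep⟩ := hflag
  -- chain of faces
  have hchain : ∀ j : Fin (k+1), ∀ i, i ≤ j → IsFaceOf (τ i) (τ j) := by
    intro j
    induction j using Fin.induction with
    | zero =>
      intro i hi
      have : i = 0 := le_antisymm hi (Fin.zero_le i)
      rw [this]
      exact isFaceOf_self _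
    | succ m IHm =>
      intro i hi
      rcases eq_or_lt_of_le hi with heq | hlt
      · rw [heq]; exact isFaceOf_self _
      · have hi' : i ≤ m.castSucc := by
          rw [Fin.lt_def] at hlt
          rw [Fin.le_def]
          simp only [Fin.val_succ] at hlt
          simp only [Fin.coe_castSucc]
          omega
        exact isFaceOf_trans (hΔ.poly _ (hmem m.succ)) (hstep m).1 (IHm i hi')
  have hsub : ∀ i j : Fin (k+1), i ≤ j → τ i ⊆ τ j := fun i j h => (hchain j i h).subset
  -- finite ray sets
  have hSfin : ∀ j : Fin (k+1), {ρ | ρ ∈ Δ ∧ IsFaceOf ρ (τ j) ∧ coneDim ρ = 1}.Finite :=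
    fun j => hΔ.finite.subset (fun ρ hρ => hρ.1)
  have hVsum : ∀ j : Fin (k+1), vVec Δ u (τ j) = ∑ ρ ∈ (hSfin j).toFinset, u ρ := by
    intro j
    have h1 := finsum_mem_coe_finset (fun ρ => u ρ) (hSfin j).toFinset
    rw [(hSfin j).coe_toFinset] at h1
    exact h1
  -- dual functionals
  have hW : ∀ m : Fin k, ∃ w, w ∈ dualCone (τ (Fin.last k)) ∧
      τ m.castSucc = τ (Fin.last k) ∩ {x | ⟪w, x⟫ = 0} := by
    intro m
    obtain ⟨w, hw1, hw2⟩ := hchain (Fin.last k) m.castSucc (Fin.le_last _)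
    exact ⟨w, hw1, hw2⟩
  choose w hwd hwe using hW
  -- vanishing below
  have hzero : ∀ (m : Fin k) (j : Fin (k+1)), j ≤ m.castSucc →
      ⟪w m, vVec Δ u (τ j)⟫ = 0 := by
    intro m j hj
    rw [hVsum j, inner_sum]
    apply Finset.sum_eq_zero
    intro ρ hρ
    rw [Set.Finite.mem_toFinset] at hρ
    obtain ⟨hρΔ, hρf, hρ1⟩ := hρ
    have huρ := (hu ρ hρΔ hρ1).1
    have hx : u ρ ∈ τ m.castSucc := hsub j m.castSucc hj (hρf.subset huρ)
    rw [hwe m] at hx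
    exact hx.2
  -- positivity above
  have hpos : ∀ (m : Fin k) (j : Fin (k+1)), m.succ ≤ j →
      0 < ⟪w m, vVec Δ u (τ j)⟫ := by
    intro m j hj
    have hjlast : j ≤ Fin.last k := Fin.le_last j
    have hnsub : ¬ (τ m.succ ⊆ τ m.castSucc) := fun hs =>
      (hstep m).2 (Set.Subset.antisymm (hstep m).1.subset hs)
    obtain ⟨x, hx1, hx2⟩ := Set.not_subset.mp hnsub
    have hxlast : x ∈ τ (Fin.last k) := hsub m.succ _ (Fin.le_last _) hx1
    have hxw_ne : ⟪w m, x⟫ ≠ 0 := by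
      intro h
      apply hx2
      rw [hwe m]
      exact ⟨hxlast, h⟩
    have hxw : 0 < ⟪w m, x⟫ := lt_of_le_of_ne (hwd m x hxlast) (Ne.symm hxw_ne)
    have hxj : x ∈ τ j := hsub m.succ j hj hx1
    have hwdj : w m ∈ dualCone (τ j) := fun y hy => hwd m y (hsub j _ hjlast hy)
    obtain ⟨ρ, hρf, hρ1, y, hyρ, hyw⟩ := exists_ray_pos (hΔ.poly _ (hmem j))
      (hΔ.strictconv _ (hmem j)) hwdj hxj hxw
    have hρΔ : ρ ∈ Δ := hΔ.face_mem _ (hmem j) ρ hρf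
    have huρ := hu ρ hρΔ hρ1
    have huρ0 : u ρ ≠ 0 := by
      intro h
      have h2 := huρ.2
      rw [h, norm_zero] at h2
      exact one_ne_zero h2.symm
    have hwuρ : 0 < ⟪w m, u ρ⟫ := one_dim_inner_pos (hΔ.poly ρ hρΔ)
      (hΔ.strictconv ρ hρΔ) hρ1 hyρ huρ.1 huρ0 hyw
    rw [hVsum j, inner_sum]
    apply Finset.sum_pos'
    · intro ρ' hρ'
      rw [Set.Finite.mem_toFinset] at hρ'
      obtain ⟨h1, h2, h3⟩ := hρ'
      exact hwd m _ (hsub j _ hjlast (h2.subset (hu ρ' h1 h3).1))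
    · exact ⟨ρ, by rw [Set.Finite.mem_toFinset]; exact ⟨hρΔ, hρf, hρ1⟩, hwuρ⟩
  -- nonvanishing of the first vector
  have hV0 : vVec Δ u (τ 0) ≠ 0 := by
    obtain ⟨ρ₀, hρ₀f, hρ₀1⟩ := exists_one_dim_face (coneDim (τ 0)) (τ 0) rfl
      (hΔ.poly _ (hmem 0)) (hΔ.strictconv _ (hmem 0)) h0
    have hρ₀Δ : ρ₀ ∈ Δ := hΔ.face_mem _ (hmem 0) ρ₀ hρ₀f
    obtain ⟨m0, v0, hint0, hτ0⟩ := hΔ.poly _ (hmem 0)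
    have hsc0 : IsStrictlyConvexCone (coneOf v0) := by
      have hh := hΔ.strictconv _ (hmem 0)
      rw [hτ0] at hh
      exact hh
    obtain ⟨u0, hu0⟩ := exists_pos_inner v0 hsc0
    have hposV : 0 < ⟪u0, vVec Δ u (τ 0)⟫ := by
      rw [hVsum 0, inner_sum]
      apply Finset.sum_pos
      · intro ρ hρ
        rw [Set.Finite.mem_toFinset] at hρ
        obtain ⟨h1, h2, h3⟩ := hρ
        have hmemτ : u ρ ∈ τ 0 := h2.subset (hu ρ h1 h3).1
        have hne : u ρ ≠ 0 := by
          intro h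
          have h2' := (hu ρ h1 h3).2
          rw [h, norm_zero] at h2'
          exact one_ne_zero h2'.symm
        have hmemc : u ρ ∈ coneOf v0 := by
          have hh := hmemτ
          rw [hτ0] at hh
          exact hh
        exact inner_pos_coneOf hu0 hmemc hne
      · exact ⟨ρ₀, by rw [Set.Finite.mem_toFinset]; exact ⟨hρ₀Δ, hρ₀f, hρ₀1⟩⟩
    intro h
    rw [h, inner_zero_right] at hposV
    exact lt_irrefl 0 hposV
  -- conclusion via triangular system
  rw [Fintype.linearIndependent_iff]
  intro c hc
  have key : ∀ d : ℕ, ∀ j : Fin (k+1), (k : ℕ) - (j : ℕ) = d → c j = 0 := by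
    intro d
    induction d using Nat.strong_induction_on with
    | _ d IH =>
    intro j hj
    have hlarger : ∀ j' : Fin (k+1), j < j' → c j' = 0 := by
      intro j' hj'
      refine IH ((k : ℕ) - (j' : ℕ)) ?_ j' rfl
      have h1 : (j:ℕ) < (j':ℕ) := hj'
      have h2 : (j':ℕ) ≤ k := Nat.lt_succ_iff.mp j'.isLt
      omega
    by_cases hj0 : j = 0
    · subst hj0
      have hsum : ∑ i, c i • vVec Δ u (τ i) = c 0 • vVec Δ u (τ 0) := by
        apply Finset.sum_eq_single 0
        · intro b _ hb
          rw [hlarger b (Fin.pos_of_ne_zero hb), zero_smul]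
        · intro h
          exact absurd (Finset.mem_univ 0) h
      rw [hsum] at hc
      rcases smul_eq_zero.mp hc with h | h
      · exact h
      · exact absurd h hV0
    · obtain ⟨m, rfl⟩ := Fin.eq_succ_of_ne_zero hj0
      have h0inner : ∑ i, c i * ⟪w m, vVec Δ u (τ i)⟫ = 0 := by
        have hz : ⟪w m, ∑ i, c i • vVec Δ u (τ i)⟫ = 0 := by rw [hc, inner_zero_right]
        rw [inner_sum] at hz
        rw [← hz]
        exact Finset.sum_congr rfl fun i _ => (real_inner_smul_right _ _ _).symm
      have hsingle : ∑ i, c i * ⟪w m, vVec Δ u (τ i)⟫ =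
          c m.succ * ⟪w m, vVec Δ u (τ m.succ)⟫ := by
        apply Finset.sum_eq_single m.succ
        · intro b _ hb
          rcases lt_or_gt_of_ne hb with hlt | hgt
          · have hble : b ≤ m.castSucc := by
              rw [Fin.lt_def] at hlt
              rw [Fin.le_def]
              simp only [Fin.val_succ] at hlt
              simp only [Fin.coe_castSucc]
              omega
            rw [hzero m b hble, mul_zero]
          · rw [hlarger b hgt, zero_mul]
        · intro h
          exact absurd (Finset.mem_univ _) h
      rw [hsingle] at h0inner
      rcases mul_eq_zero.mp h0inner with h | h
      · exact h
      · exact absurd h (ne_of_gt (hpos m m.succ (le_refl _)))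
  exact fun i => key ((k:ℕ) - (i:ℕ)) i rfl


end
end

section
/- Let k be a field and σ ⊂ ℝ^n a rational polyhedral cone. Set S = σ^∨ ∩ ℤ^n and S⊥ = σ^⊥ ∩ ℤ^n, so S⊥ ⊆ S are submonoids of ℤ^n. Then: (a) there is a (unique) k-algebra homomorphism π : k[S] → k[S⊥] with π(χ^v) = χ^v for v ∈ S⊥ and π(χ^v) = 0 for v ∈ S ∖ S⊥, and a k-algebra homomorphism ι : k[S⊥] → k[S] with ι(χ^v) = χ^v; (b) there exists a k-algebra homomorphism h : k[S] → k[S][t] into the polynomial ring over k[S] such that ev₁ ∘ h = id_{k[S]}, ev₀ ∘ h = ι ∘ π, and π ∘ ev_c ∘ h = π for every c ∈ k, where ev_c : k[S][t] → k[S] denotes evaluation of the variable t at c. (This is the algebraic homotopy between the affine toric chart X_σ and its closed orbit T_σ.) -/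
open scoped RealInnerProductSpace

noncomputable section

/-- The real vector of `ℝ^n` associated to an integer vector of `ℤ^n`. -/
def toRealVec {n : ℕ} (v : Fin n → ℤ) : Euc n := WithLp.toLp 2 (fun i => (v i : ℝ))

lemma toRealVec_zero {n : ℕ} : toRealVec (0 : Fin n → ℤ) = 0 := by
  ext i; simp [toRealVec]

lemma toRealVec_add {n : ℕ} (v w : Fin n → ℤ) :
    toRealVec (v + w) = toRealVec v + toRealVec w := by
  ext i
  show ((v i + w i : ℤ) : ℝ) = toRealVec v i + toRealVec w i
  push_cast
  rfl

/-- The monoid `S = σ^∨ ∩ ℤ^n` of lattice points of the dual cone. -/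
def dualLatticeMonoid {n : ℕ} (σ : Set (Euc n)) : AddSubmonoid (Fin n → ℤ) where
  carrier := {v | toRealVec v ∈ dualCone σ}
  zero_mem' := by
    intro x hx
    rw [toRealVec_zero, inner_zero_left]
  add_mem' := by
    intro v w hv hw x hx
    rw [toRealVec_add, inner_add_left]
    exact add_nonneg (hv x hx) (hw x hx)

/-- The monoid `S⊥ = σ^⊥ ∩ ℤ^n` of lattice points of the orthogonal of `σ`. -/
def orthLatticeMonoid {n : ℕ} (σ : Set (Euc n)) : AddSubmonoid (Fin n → ℤ) where
  carrier := {v | toRealVec v ∈ orthCone σ}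
  zero_mem' := by
    intro x hx
    rw [toRealVec_zero, inner_zero_left]
  add_mem' := by
    intro v w hv hw x hx
    rw [toRealVec_add, inner_add_left, hv x hx, hw x hx, add_zero]

lemma orthLatticeMonoid_le_dualLatticeMonoid {n : ℕ} (σ : Set (Euc n)) :
    orthLatticeMonoid σ ≤ dualLatticeMonoid σ :=
  fun _ hv x hx => (hv x hx).ge

/-- `π : k[S] → k[S⊥]` is the projection: `π(χ^v) = χ^v` for `v ∈ S⊥` and
`π(χ^v) = 0` for `v ∈ S ∖ S⊥`. -/
def IsOrbitProjection {n : ℕ} (𝕜 : Type*) [Field 𝕜] (σ : Set (Euc n))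
    (π : AddMonoidAlgebra 𝕜 ↥(dualLatticeMonoid σ) →ₐ[𝕜]
      AddMonoidAlgebra 𝕜 ↥(orthLatticeMonoid σ)) : Prop :=
  (∀ v : ↥(orthLatticeMonoid σ),
      π (AddMonoidAlgebra.single
          (AddSubmonoid.inclusion (orthLatticeMonoid_le_dualLatticeMonoid σ) v) 1) =
        AddMonoidAlgebra.single v 1) ∧
  (∀ v : ↥(dualLatticeMonoid σ), (v : Fin n → ℤ) ∉ orthLatticeMonoid σ →
      π (AddMonoidAlgebra.single v 1) = 0)

/-- `ι : k[S⊥] → k[S]` is the inclusion: `ι(χ^v) = χ^v` for `v ∈ S⊥`. -/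
def IsOrbitInclusion {n : ℕ} (𝕜 : Type*) [Field 𝕜] (σ : Set (Euc n))
    (ι : AddMonoidAlgebra 𝕜 ↥(orthLatticeMonoid σ) →ₐ[𝕜]
      AddMonoidAlgebra 𝕜 ↥(dualLatticeMonoid σ)) : Prop :=
  ∀ v : ↥(orthLatticeMonoid σ),
    ι (AddMonoidAlgebra.single v 1) =
      AddMonoidAlgebra.single
        (AddSubmonoid.inclusion (orthLatticeMonoid_le_dualLatticeMonoid σ) v) 1


section Aux

variable {n : ℕ} {σ : Set (Euc n)}

/-- The face property: if `u, w ∈ S` and `u + w ∈ S⊥` then `u ∈ S⊥`. -/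
lemma face_property {u w : Fin n → ℤ} (hu : u ∈ dualLatticeMonoid σ)
    (hw : w ∈ dualLatticeMonoid σ) (huw : u + w ∈ orthLatticeMonoid σ) :
    u ∈ orthLatticeMonoid σ := by
  intro x hx
  have h1 := hu x hx
  have h2 := hw x hx
  have h3 := huw x hx
  rw [toRealVec_add, inner_add_left] at h3
  linarith

open Classical in
/-- The monoid hom underlying the orbit projection. -/
def projMonoidHom (𝕜 : Type*) [Field 𝕜] (σ : Set (Euc n)) :
    Multiplicative ↥(dualLatticeMonoid σ) →* AddMonoidAlgebra 𝕜 ↥(orthLatticeMonoid σ) where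
  toFun u := if h : ((Multiplicative.toAdd u : ↥(dualLatticeMonoid σ)) : Fin n → ℤ) ∈
      orthLatticeMonoid σ then AddMonoidAlgebra.single ⟨_, h⟩ 1 else 0
  map_one' := by
    rw [dif_pos (by exact (orthLatticeMonoid σ).zero_mem)]
    exact (AddMonoidAlgebra.one_def).symm
  map_mul' a b := by
    by_cases ha : ((Multiplicative.toAdd a : ↥(dualLatticeMonoid σ)) : Fin n → ℤ) ∈
        orthLatticeMonoid σ
    · by_cases hb : ((Multiplicative.toAdd b : ↥(dualLatticeMonoid σ)) : Fin n → ℤ) ∈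
          orthLatticeMonoid σ
      · have hab : ((Multiplicative.toAdd (a * b) : ↥(dualLatticeMonoid σ)) : Fin n → ℤ) ∈
            orthLatticeMonoid σ := by
          simpa using (orthLatticeMonoid σ).add_mem ha hb
        rw [dif_pos hab, dif_pos ha, dif_pos hb, AddMonoidAlgebra.single_mul_single, one_mul]
        exact congrArg (AddMonoidAlgebra.single · 1) (Subtype.ext rfl)
      · have hab : ¬ ((Multiplicative.toAdd (a * b) : ↥(dualLatticeMonoid σ)) : Fin n → ℤ) ∈
            orthLatticeMonoid σ := by
          intro h
          exact hb (face_property (Multiplicative.toAdd b).2 (Multiplicative.toAdd a).2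
            (by simpa [add_comm] using h))
        rw [dif_pos ha, dif_neg hab, dif_neg hb, mul_zero]
    · have hab : ¬ ((Multiplicative.toAdd (a * b) : ↥(dualLatticeMonoid σ)) : Fin n → ℤ) ∈
          orthLatticeMonoid σ := by
        intro h
        exact ha (face_property (Multiplicative.toAdd a).2 (Multiplicative.toAdd b).2
          (by simpa using h))
      rw [dif_neg ha, dif_neg hab, zero_mul]

/-- The monoid hom underlying the orbit inclusion. -/
def inclMonoidHom (𝕜 : Type*) [Field 𝕜] (σ : Set (Euc n)) :
    Multiplicative ↥(orthLatticeMonoid σ) →* AddMonoidAlgebra 𝕜 ↥(dualLatticeMonoid σ) where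
  toFun u := AddMonoidAlgebra.single
    (AddSubmonoid.inclusion (orthLatticeMonoid_le_dualLatticeMonoid σ)
      (Multiplicative.toAdd u)) 1
  map_one' := by
    rw [AddMonoidAlgebra.one_def]
    congr 1
  map_mul' a b := by
    rw [AddMonoidAlgebra.single_mul_single, mul_one]
    congr 1

/-- A degree function: an additive map `d : S →+ ℕ` vanishing exactly on `S⊥`. -/
lemma exists_deg (σ : Set (Euc n)) (hσ : IsRatPolyCone σ) :
    ∃ d : ↥(dualLatticeMonoid σ) →+ ℕ,
      ∀ u : ↥(dualLatticeMonoid σ), d u = 0 ↔ (u : Fin n → ℤ) ∈ orthLatticeMonoid σ := by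
  obtain ⟨K, v, hint, rfl⟩ := hσ
  set σ' : Set (Euc n) := {x | ∃ lam : Fin K → ℝ, (∀ i, 0 ≤ lam i) ∧ x = ∑ i, lam i • v i}
    with hσ'
  -- integer coordinates of the generators
  choose m hm using hint
  -- generators belong to the cone
  have hvσ : ∀ i, v i ∈ σ' := by
    intro i
    refine ⟨fun j => if j = i then 1 else 0, fun j => by positivity, ?_⟩
    simp [ite_smul]
  -- inner products as integers
  have hinner : ∀ (u : Fin n → ℤ) (i : Fin K),
      ⟪toRealVec u, v i⟫ = ((∑ j, u j * m i j : ℤ) : ℝ) := by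
    intro u i
    rw [PiLp.inner_apply]
    push_cast
    refine Finset.sum_congr rfl fun j _ => ?_
    rw [RCLike.inner_apply, hm i j]
    simp [toRealVec, mul_comm]
  set D : (Fin n → ℤ) → Fin K → ℤ := fun u i => ∑ j, u j * m i j with hD
  have hDnn : ∀ u : ↥(dualLatticeMonoid σ'), ∀ i, 0 ≤ D (u : Fin n → ℤ) i := by
    intro u i
    have := u.2 (v i) (hvσ i)
    rw [hinner] at this
    exact_mod_cast this
  set T : (Fin n → ℤ) → ℤ := fun u => ∑ i, D u i with hT
  have hTadd : ∀ a b : Fin n → ℤ, T (a + b) = T a + T b := by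
    intro a b
    simp only [hT, hD, Pi.add_apply, add_mul, Finset.sum_add_distrib]
  have hTnn : ∀ u : ↥(dualLatticeMonoid σ'), 0 ≤ T (u : Fin n → ℤ) :=
    fun u => Finset.sum_nonneg fun i _ => hDnn u i
  refine ⟨{ toFun := fun u => (T (u : Fin n → ℤ)).toNat,
            map_zero' := by simp [hT, hD],
            map_add' := fun a b => by
              rw [AddSubmonoid.coe_add, hTadd, Int.toNat_add (hTnn a) (hTnn b)] }, ?_⟩
  intro u
  simp only [AddMonoidHom.coe_mk, ZeroHom.coe_mk]
  rw [Int.toNat_eq_zero]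
  constructor
  · intro h
    have hT0 : T (u : Fin n → ℤ) = 0 := le_antisymm h (hTnn u)
    have hD0 : ∀ i ∈ Finset.univ, D (u : Fin n → ℤ) i = 0 :=
      (Finset.sum_eq_zero_iff_of_nonneg (fun i _ => hDnn u i)).1 hT0
    intro x hx
    obtain ⟨lam, hlam, rfl⟩ := hx
    rw [inner_sum]
    refine Finset.sum_eq_zero fun i _ => ?_
    rw [real_inner_smul_right, hinner]
    rw [show (∑ j, (u : Fin n → ℤ) j * m i j) = D (u : Fin n → ℤ) i from rfl,
      hD0 i (Finset.mem_univ i)]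
    simp
  · intro h
    have : T (u : Fin n → ℤ) = 0 := by
      refine Finset.sum_eq_zero fun i _ => ?_
      have := h (v i) (hvσ i)
      rw [hinner] at this
      exact_mod_cast this
    omega

end Aux


/-- For a rational polyhedral cone `σ ⊆ ℝ^n` and a field
`k`, with `S = σ^∨ ∩ ℤ^n ⊇ S⊥ = σ^⊥ ∩ ℤ^n`: (a) there is a unique
`k`-algebra homomorphism `π : k[S] → k[S⊥]` with `π(χ^v) = χ^v` for
`v ∈ S⊥` and `π(χ^v) = 0` for `v ∈ S ∖ S⊥`, and a `k`-algebra
homomorphism `ι : k[S⊥] → k[S]` with `ι(χ^v) = χ^v`; (b) there is a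
`k`-algebra homomorphism `h : k[S] → k[S][t]` with `ev₁ ∘ h = id`,
`ev₀ ∘ h = ι ∘ π` and `π ∘ ev_c ∘ h = π` for every `c ∈ k`.  (The algebraic
homotopy between the affine toric chart `X_σ` and its closed orbit
`T_σ`.) -/

theorem affine_chart_algebraic_homotopy {n : ℕ} (𝕜 : Type*) [Field 𝕜]
    (σ : Set (Euc n)) (hσ : IsRatPolyCone σ) :
    (∃ π, IsOrbitProjection 𝕜 σ π) ∧
    (∀ π π', IsOrbitProjection 𝕜 σ π → IsOrbitProjection 𝕜 σ π' → π = π') ∧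
    (∃ ι, IsOrbitInclusion 𝕜 σ ι) ∧
    (∀ π ι, IsOrbitProjection 𝕜 σ π → IsOrbitInclusion 𝕜 σ ι →
      ∃ h : AddMonoidAlgebra 𝕜 ↥(dualLatticeMonoid σ) →ₐ[𝕜]
          Polynomial (AddMonoidAlgebra 𝕜 ↥(dualLatticeMonoid σ)),
        (∀ a, Polynomial.eval 1 (h a) = a) ∧
        (∀ a, Polynomial.eval 0 (h a) = ι (π a)) ∧
        (∀ c : 𝕜, ∀ a,
          π (Polynomial.eval
            (algebraMap 𝕜 (AddMonoidAlgebra 𝕜 ↥(dualLatticeMonoid σ)) c) (h a)) = π a)) := by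
  classical
  -- the projection
  have hπ_ex : ∃ π, IsOrbitProjection 𝕜 σ π := by
    refine ⟨AddMonoidAlgebra.lift 𝕜 _ _ (projMonoidHom 𝕜 σ), ?_, ?_⟩
    · intro w
      rw [AddMonoidAlgebra.lift_single, one_smul]
      show (if h : ((w : Fin n → ℤ)) ∈ orthLatticeMonoid σ then
          AddMonoidAlgebra.single (⟨(w : Fin n → ℤ), h⟩ : ↥(orthLatticeMonoid σ)) 1
        else 0) = AddMonoidAlgebra.single w 1
      rw [dif_pos w.2]
    · intro w hw
      rw [AddMonoidAlgebra.lift_single, one_smul]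
      show (if h : ((w : Fin n → ℤ)) ∈ orthLatticeMonoid σ then
          AddMonoidAlgebra.single (⟨(w : Fin n → ℤ), h⟩ : ↥(orthLatticeMonoid σ)) 1
        else 0) = 0
      rw [dif_neg hw]
  have hι_ex : ∃ ι, IsOrbitInclusion 𝕜 σ ι := by
    refine ⟨AddMonoidAlgebra.lift 𝕜 _ _ (inclMonoidHom 𝕜 σ), fun w => ?_⟩
    rw [AddMonoidAlgebra.lift_single, one_smul]
    rfl
  refine ⟨hπ_ex, ?_, hι_ex, ?_⟩
  · -- uniqueness of π
    intro π π' h1 h2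
    refine AddMonoidAlgebra.algHom_ext ?_ (Subsingleton.elim _ _)
    intro x
    by_cases hx : ((x : ↥(dualLatticeMonoid σ)) : Fin n → ℤ) ∈ orthLatticeMonoid σ
    · have hx' : AddSubmonoid.inclusion (orthLatticeMonoid_le_dualLatticeMonoid σ)
          ⟨(x : Fin n → ℤ), hx⟩ = x := Subtype.ext rfl
      rw [show (AddMonoidAlgebra.single x (1 : 𝕜)) =
        AddMonoidAlgebra.single (AddSubmonoid.inclusion
          (orthLatticeMonoid_le_dualLatticeMonoid σ) ⟨(x : Fin n → ℤ), hx⟩) 1 from by rw [hx'],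
        h1.1, h2.1]
    · rw [h1.2 x hx, h2.2 x hx]
  · -- the homotopy
    intro π ι hπ hι
    obtain ⟨d, hd⟩ := exists_deg σ hσ
    set A := AddMonoidAlgebra 𝕜 ↥(dualLatticeMonoid σ)
    -- the monoid hom underlying h
    set F : Multiplicative ↥(dualLatticeMonoid σ) →* Polynomial A :=
      { toFun := fun u => Polynomial.C (AddMonoidAlgebra.single (Multiplicative.toAdd u) 1) *
          Polynomial.X ^ (d (Multiplicative.toAdd u)),
        map_one' := by
          simp only [toAdd_one, map_zero, pow_zero, mul_one, ← AddMonoidAlgebra.one_def,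
            map_one]
        map_mul' := fun a b => by
          have hs : (AddMonoidAlgebra.single
              (Multiplicative.toAdd a + Multiplicative.toAdd b) (1 : 𝕜)) =
              AddMonoidAlgebra.single (Multiplicative.toAdd a) 1 *
                AddMonoidAlgebra.single (Multiplicative.toAdd b) 1 := by
            rw [AddMonoidAlgebra.single_mul_single, one_mul]
          simp only [toAdd_mul, map_add, pow_add, hs, map_mul]
          ring } with hF
    set h : A →ₐ[𝕜] Polynomial A := AddMonoidAlgebra.lift 𝕜 _ _ F with hh
    have hsingle : ∀ u : ↥(dualLatticeMonoid σ),
        h (AddMonoidAlgebra.single u 1) =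
          Polynomial.C (AddMonoidAlgebra.single u 1) * Polynomial.X ^ (d u) := by
      intro u
      rw [hh, AddMonoidAlgebra.lift_single, one_smul]
      rfl
    refine ⟨h, ?_, ?_, ?_⟩
    · -- eval 1
      have key : (((Polynomial.aeval (1 : A)).restrictScalars 𝕜).comp h) = AlgHom.id 𝕜 A := by
        refine AddMonoidAlgebra.algHom_ext ?_ (Subsingleton.elim _ _)
        intro x
        simp [hsingle x]
        rfl
      intro a
      have := congrArg (fun f => f a) (congrArg (fun g => g.toFun) key)
      simpa [Polynomial.coe_aeval_eq_eval] using
        congrArg (fun (f : A →ₐ[𝕜] A) => f a) key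
    · -- eval 0
      have key : (((Polynomial.aeval (0 : A)).restrictScalars 𝕜).comp h) = ι.comp π := by
        refine AddMonoidAlgebra.algHom_ext ?_ (Subsingleton.elim _ _)
        intro x
        by_cases hx : ((x : ↥(dualLatticeMonoid σ)) : Fin n → ℤ) ∈ orthLatticeMonoid σ
        · have hd0 : d x = 0 := (hd x).2 hx
          have hx' : AddSubmonoid.inclusion (orthLatticeMonoid_le_dualLatticeMonoid σ)
              ⟨(x : Fin n → ℤ), hx⟩ = x := Subtype.ext rfl
          have hπx : π (AddMonoidAlgebra.single x 1) =
              AddMonoidAlgebra.single ⟨(x : Fin n → ℤ), hx⟩ 1 := by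
            rw [show (AddMonoidAlgebra.single x (1 : 𝕜)) =
              AddMonoidAlgebra.single (AddSubmonoid.inclusion
                (orthLatticeMonoid_le_dualLatticeMonoid σ) ⟨(x : Fin n → ℤ), hx⟩) 1 from by
                  rw [hx'], hπ.1]
          simp [hsingle x, hd0, hπx, hι _, hx']
        · have hd0 : d x ≠ 0 := fun hc => hx ((hd x).1 hc)
          simp [hsingle x, hπ.2 x hx, zero_pow hd0]
      intro a
      simpa [Polynomial.coe_aeval_eq_eval] using
        congrArg (fun (f : A →ₐ[𝕜] A) => f a) key
    · -- eval at algebraMap c, then π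
      intro c
      have key : (π.comp (((Polynomial.aeval (algebraMap 𝕜 A c)).restrictScalars 𝕜).comp h)) =
          π := by
        refine AddMonoidAlgebra.algHom_ext ?_ (Subsingleton.elim _ _)
        intro x
        by_cases hx : ((x : ↥(dualLatticeMonoid σ)) : Fin n → ℤ) ∈ orthLatticeMonoid σ
        · have hd0 : d x = 0 := (hd x).2 hx
          simp [hsingle x, hd0]
        · simp [hsingle x, hπ.2 x hx]
      intro a
      simpa [Polynomial.coe_aeval_eq_eval, A] using
        congrArg (fun (f : A →ₐ[𝕜] _) => f a) key

end
end

section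
/- Let k be a field, σ ⊂ ℝ^n a strictly convex rational polyhedral cone, and τ a face of σ. Then σ^∨ ∩ ℤ^n ⊆ τ^∨ ∩ ℤ^n, and the morphism of affine schemes Spec k[τ^∨ ∩ ℤ^n] → Spec k[σ^∨ ∩ ℤ^n] induced by the inclusion of monoid algebras k[σ^∨ ∩ ℤ^n] → k[τ^∨ ∩ ℤ^n] is an open immersion. -/
open scoped RealInnerProductSpace

noncomputable section

/-! ### Auxiliary material -/

section AuxLinearAlgebra

open Matrix

/-- Coordinatewise cast `ℚ^m → ℝ^m` as a `ℚ`-linear map. -/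
def qcast (m : ℕ) : (Fin m → ℚ) →ₗ[ℚ] (Fin m → ℝ) where
  toFun y := fun i => (y i : ℝ)
  map_add' y z := by funext i; show ((y i + z i : ℚ) : ℝ) = _; push_cast; rfl
  map_smul' a y := by
    funext i
    show ((a * y i : ℚ) : ℝ) = a • (fun i => ((y i : ℝ))) i
    push_cast
    simp [Rat.smul_def]

lemma qcast_apply {m : ℕ} (y : Fin m → ℚ) (i : Fin m) : qcast m y i = (y i : ℝ) := rfl

/-- `ℚ`-linearly independent rational vectors are `ℝ`-linearly independent. -/
lemma li_cast {m r : ℕ} (w : Fin r → (Fin m → ℚ)) (hw : LinearIndependent ℚ w) :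
    LinearIndependent ℝ (fun t => qcast m (w t)) := by
  classical
  set G : Matrix (Fin r) (Fin r) ℚ := fun s t => ∑ j, w s j * w t j with hG
  have hdet : G.det ≠ 0 := by
    intro h0
    obtain ⟨c, hc0, hcv⟩ := Matrix.exists_mulVec_eq_zero_iff.mpr h0
    have hz : ∑ t, c t • w t = 0 := by
      have hsq : ∑ j, (∑ t, c t * w t j) * (∑ t, c t * w t j) = 0 := by
        have : ∑ j, (∑ s, c s * w s j) * (∑ t, c t * w t j)
            = ∑ s, c s * (G.mulVec c s) := by
          simp only [Matrix.mulVec, dotProduct, hG, Finset.sum_mul, Finset.mul_sum]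
          rw [Finset.sum_comm]
          refine Finset.sum_congr rfl fun s _ => ?_
          rw [Finset.sum_comm]
          refine Finset.sum_congr rfl fun t _ => Finset.sum_congr rfl fun j _ => by ring
        rw [this, hcv]
        simp
      funext j
      have hnn : ∀ j ∈ Finset.univ, 0 ≤ (∑ t, c t * w t j) * (∑ t, c t * w t j) :=
        fun j _ => mul_self_nonneg _
      have := (Finset.sum_eq_zero_iff_of_nonneg hnn).mp hsq j (Finset.mem_univ j)
      have hj : (∑ t, c t * w t j) = 0 := by
        exact mul_self_eq_zero.mp this
      simpa [Finset.sum_apply] using hj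
    exact hc0 (funext (Fintype.linearIndependent_iff.mp hw c hz))
  rw [Fintype.linearIndependent_iff]
  intro c hc t
  have hcoord : ∀ j, ∑ t, c t * (w t j : ℝ) = 0 := by
    intro j
    have := congrFun hc j
    simpa [Finset.sum_apply, qcast_apply] using this
  have hmv : ((Rat.castHom ℝ).mapMatrix G).mulVec c = 0 := by
    funext s
    have : ∑ t, (G s t : ℝ) * c t = 0 := by
      simp only [hG]
      push_cast
      simp only [Finset.sum_mul]
      rw [Finset.sum_comm]
      have : ∀ j, ∑ t, (w s j : ℝ) * (w t j : ℝ) * c t = (w s j : ℝ) * ∑ t, c t * (w t j : ℝ) := by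
        intro j; rw [Finset.mul_sum]; exact Finset.sum_congr rfl fun t _ => by ring
      rw [Finset.sum_congr rfl fun j _ => this j]
      simp [hcoord]
    simpa [Matrix.mulVec, dotProduct] using this
  by_contra hct
  have hc0 : c ≠ 0 := fun h => hct (by simp [h])
  have : ((Rat.castHom ℝ).mapMatrix G).det = 0 :=
    Matrix.exists_mulVec_eq_zero_iff.mp ⟨c, hc0, hmv⟩
  rw [← RingHom.map_det] at this
  rw [map_eq_zero_iff _ (Rat.cast_injective (α := ℝ))] at this
  exact hdet this

lemma qcast_mem_span {m : ℕ} {S : Set (Fin m → ℚ)} {y : Fin m → ℚ}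
    (hy : y ∈ Submodule.span ℚ S) :
    qcast m y ∈ Submodule.span ℝ (qcast m '' S) := by
  induction hy using Submodule.span_induction with
  | mem x hx => exact Submodule.subset_span ⟨x, hx, rfl⟩
  | zero => simpa using Submodule.zero_mem _
  | add x y _ _ hx hy => rw [map_add]; exact Submodule.add_mem _ hx hy
  | smul a x _ hx =>
      rw [_root_.map_smul]
      have : a • qcast m x = (a : ℝ) • qcast m x := rfl
      rw [this]
      exact Submodule.smul_mem _ _ hx

lemma finrank_span_cast {m : ℕ} (S : Set (Fin m → ℚ)) :
    Module.finrank ℝ (Submodule.span ℝ (qcast m '' S)) =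
      Module.finrank ℚ (Submodule.span ℚ S) := by
  classical
  set K := Submodule.span ℚ S with hK
  let b := Module.finBasis ℚ K
  set r := Module.finrank ℚ K
  let u : Fin r → (Fin m → ℚ) := fun t => (b t : Fin m → ℚ)
  have hu_li : LinearIndependent ℚ u :=
    b.linearIndependent.map' K.subtype (Submodule.ker_subtype K)
  have hKspan : Submodule.span ℚ (Set.range u) = K := by
    have : Set.range u = K.subtype '' (Set.range b) := by
      rw [← Set.range_comp]; rfl
    rw [this, Submodule.span_image, b.span_eq, Submodule.map_top, Submodule.range_subtype]
  have hspan_eq : Submodule.span ℝ (qcast m '' S)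
      = Submodule.span ℝ (Set.range fun t => qcast m (u t)) := by
    apply le_antisymm
    · rw [Submodule.span_le]
      rintro _ ⟨y, hyS, rfl⟩
      have hy : y ∈ Submodule.span ℚ (Set.range u) := by rw [hKspan]; exact Submodule.subset_span hyS
      have := qcast_mem_span hy
      rwa [← Set.range_comp] at this
    · rw [Submodule.span_le]
      rintro _ ⟨t, rfl⟩
      have : u t ∈ Submodule.span ℚ S := by rw [← hK]; exact (b t).2
      exact qcast_mem_span this
  rw [hspan_eq, finrank_span_eq_card (li_cast u hu_li), Fintype.card_fin]

/-- The real kernel of a rational matrix is spanned by rational solutions. -/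
lemma ker_cast_span {p n : ℕ} (A : Matrix (Fin p) (Fin n) ℚ) :
    ∃ (r : ℕ) (w : Fin r → (Fin n → ℚ)), (∀ t, A.mulVec (w t) = 0) ∧
      (LinearMap.ker (A.map (Rat.cast : ℚ → ℝ)).mulVecLin : Submodule ℝ (Fin n → ℝ))
        = Submodule.span ℝ (Set.range fun t => qcast n (w t)) := by
  classical
  set Kq : Submodule ℚ (Fin n → ℚ) := LinearMap.ker A.mulVecLin with hKq
  let b := Module.finBasis ℚ Kq
  set r := Module.finrank ℚ Kq with hr
  let u : Fin r → (Fin n → ℚ) := fun t => (b t : Fin n → ℚ)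
  have hu_li : LinearIndependent ℚ u :=
    b.linearIndependent.map' Kq.subtype (Submodule.ker_subtype Kq)
  refine ⟨r, u, fun t => (b t).2, ?_⟩
  have hle : Submodule.span ℝ (Set.range fun t => qcast n ((b t : Fin n → ℚ)))
      ≤ LinearMap.ker (A.map (Rat.cast : ℚ → ℝ)).mulVecLin := by
    rw [Submodule.span_le]
    rintro _ ⟨t, rfl⟩
    have hbt : A.mulVec (b t : Fin n → ℚ) = 0 := (b t).2
    simp only [SetLike.mem_coe, LinearMap.mem_ker, mulVecLin_apply]
    funext s
    have : ∑ j, (A s j : ℝ) * ((b t : Fin n → ℚ) j : ℝ) = ((A.mulVec (b t : Fin n → ℚ)) s : ℝ) := by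
      simp [Matrix.mulVec, dotProduct]
    simp only [Matrix.mulVec, dotProduct, Matrix.map_apply, qcast_apply, Pi.zero_apply]
    rw [this, hbt]
    simp
  have hrank : (A.map (Rat.cast : ℚ → ℝ)).rank = A.rank := by
    rw [Matrix.rank_eq_finrank_span_cols, Matrix.rank_eq_finrank_span_cols]
    have himg : Set.range (A.map (Rat.cast : ℚ → ℝ)).col = qcast p '' Set.range A.col := by
      rw [← Set.range_comp]
      rfl
    rw [himg, finrank_span_cast]
  have hdim : Module.finrank ℝ (LinearMap.ker (A.map (Rat.cast : ℚ → ℝ)).mulVecLin)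
      = Module.finrank ℚ (LinearMap.ker A.mulVecLin) := by
    have h1 := LinearMap.finrank_range_add_finrank_ker ((A.map (Rat.cast : ℚ → ℝ)).mulVecLin)
    have h2 := LinearMap.finrank_range_add_finrank_ker (A.mulVecLin)
    have e1 : Module.finrank ℝ (LinearMap.range (A.map (Rat.cast : ℚ → ℝ)).mulVecLin)
        = (A.map (Rat.cast : ℚ → ℝ)).rank := rfl
    have e2 : Module.finrank ℚ (LinearMap.range A.mulVecLin) = A.rank := rfl
    have e3 : Module.finrank ℝ (Fin n → ℝ) = n := by simp
    have e4 : Module.finrank ℚ (Fin n → ℚ) = n := by simp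
    rw [e1, e3, hrank] at h1
    rw [e2, e4] at h2
    omega
  refine (Submodule.eq_of_le_of_finrank_eq hle ?_).symm
  rw [finrank_span_eq_card (li_cast u hu_li), Fintype.card_fin, hdim]

end AuxLinearAlgebra

section AuxRational

lemma den_mul_self_eq_num (q : ℚ) : (q.den : ℚ) * q = q.num := by
  have hne : (q.den : ℚ) ≠ 0 := by exact_mod_cast q.den_ne_zero
  rw [mul_comm]
  exact ((div_eq_iff hne).mp (Rat.num_div_den q)).symm

/-- A rational vector can be scaled by a positive rational into an integer vector. -/
lemma int_scale {n : ℕ} (y : Fin n → ℚ) :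
    ∃ (z : Fin n → ℤ) (N : ℚ), 0 < N ∧ ∀ j, (z j : ℚ) = N * y j := by
  classical
  set D : ℕ := ∏ j, (y j).den with hD
  refine ⟨fun j => (y j).num * (D / (y j).den : ℕ), (D : ℚ), ?_, ?_⟩
  · have : 0 < D := Finset.prod_pos fun j _ => (y j).pos
    exact_mod_cast this
  · intro j
    show (((y j).num * (D / (y j).den : ℕ) : ℤ) : ℚ) = (D : ℚ) * y j
    have hdvd : (y j).den ∣ D := Finset.dvd_prod_of_mem (fun j' => (y j').den) (Finset.mem_univ j)
    obtain ⟨M, hM⟩ := hdvd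
    have hMq : (D / (y j).den : ℕ) = M := by rw [hM]; exact Nat.mul_div_cancel_left M (y j).pos
    have hDq : (D : ℚ) = ((y j).den : ℚ) * (M : ℚ) := by rw [hM]; push_cast; ring
    rw [hMq, hDq]
    have : ((((y j).num * (M : ℤ)) : ℤ) : ℚ) = ((y j).num : ℚ) * (M : ℚ) := by push_cast; ring
    rw [this, mul_comm ((y j).den : ℚ), mul_assoc, den_mul_self_eq_num, mul_comm]

open Matrix in
/-- Given a real solution of a rational system of linear equalities and strict
inequalities, there is a rational solution. -/
lemma rat_sign_pattern {n k : ℕ} (vq : Fin k → (Fin n → ℚ)) (I : Set (Fin k)) (u : Fin n → ℝ)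
    (hu0 : ∀ i ∈ I, ∑ j, (vq i j : ℝ) * u j = 0)
    (hupos : ∀ i ∉ I, 0 < ∑ j, (vq i j : ℝ) * u j) :
    ∃ y : Fin n → ℚ, (∀ i ∈ I, ∑ j, vq i j * y j = 0) ∧ (∀ i ∉ I, 0 < ∑ j, vq i j * y j) := by
  classical
  set A : Matrix (Fin k) (Fin n) ℚ := Matrix.of (fun i j => if i ∈ I then vq i j else 0) with hA
  have hAmem : ∀ i ∈ I, ∀ j, A i j = vq i j := fun i hi j => by simp [hA, hi]
  have hu_ker : (A.map (Rat.cast : ℚ → ℝ)).mulVec u = 0 := by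
    funext i
    show ∑ j, ((A i j : ℚ) : ℝ) * u j = 0
    by_cases hi : i ∈ I
    · rw [← hu0 i hi]
      exact Finset.sum_congr rfl fun j _ => by rw [hAmem i hi j]
    · refine Finset.sum_eq_zero fun j _ => ?_
      have : A i j = 0 := by simp [hA, hi]
      rw [this]; simp
  obtain ⟨r, w, hwker, hker⟩ := ker_cast_span A
  have humem : u ∈ Submodule.span ℝ (Set.range fun t => qcast n (w t)) := by
    rw [← hker]
    simpa [Matrix.mulVecLin_apply] using hu_ker
  obtain ⟨c, hc⟩ := (Submodule.mem_span_range_iff_exists_fun ℝ).mp humem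
  have hu_eq : ∀ j, u j = ∑ t, c t * (w t j : ℝ) := by
    intro j
    rw [← hc]
    simp [Finset.sum_apply, qcast_apply]
  set F : Fin k → (Fin r → ℝ) → ℝ :=
    fun i d => ∑ t, d t * (∑ j, (vq i j : ℝ) * (w t j : ℝ)) with hF
  have hFc : ∀ i, F i c = ∑ j, (vq i j : ℝ) * u j := by
    intro i
    show ∑ t, c t * (∑ j, (vq i j : ℝ) * (w t j : ℝ)) = _
    calc ∑ t, c t * (∑ j, (vq i j : ℝ) * (w t j : ℝ))
        = ∑ t, ∑ j, c t * ((vq i j : ℝ) * (w t j : ℝ)) := by simp_rw [Finset.mul_sum]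
      _ = ∑ j, ∑ t, c t * ((vq i j : ℝ) * (w t j : ℝ)) := Finset.sum_comm
      _ = ∑ j, (vq i j : ℝ) * ∑ t, c t * (w t j : ℝ) := by
          refine Finset.sum_congr rfl fun j _ => ?_
          rw [Finset.mul_sum]
          exact Finset.sum_congr rfl fun t _ => by ring
      _ = ∑ j, (vq i j : ℝ) * u j := by
          refine Finset.sum_congr rfl fun j _ => ?_
          rw [hu_eq j]
  have hFcont : ∀ i, Continuous (F i) := by
    intro i
    exact continuous_finset_sum _ fun t _ => (continuous_apply t).mul continuous_const
  set U : Set (Fin r → ℝ) := ⋂ i, (if i ∈ I then Set.univ else (F i) ⁻¹' Set.Ioi 0) with hU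
  have hUopen : IsOpen U := by
    refine isOpen_iInter_of_finite fun i => ?_
    split
    · exact isOpen_univ
    · exact (hFcont i).isOpen_preimage _ isOpen_Ioi
  have hcU : c ∈ U := by
    rw [hU, Set.mem_iInter]
    intro i
    by_cases hi : i ∈ I
    · rw [if_pos hi]; trivial
    · rw [if_neg hi]
      show F i c ∈ Set.Ioi (0:ℝ)
      rw [Set.mem_Ioi, hFc i]
      exact hupos i hi
  have hdense : Dense (Set.pi Set.univ fun _ : Fin r => Set.range (Rat.cast : ℚ → ℝ)) :=
    dense_pi Set.univ fun _ _ => Rat.denseRange_cast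
  obtain ⟨d, hdS, hdU⟩ := hdense.exists_mem_open hUopen ⟨c, hcU⟩
  choose q hq using fun t => hdS t (Set.mem_univ t)
  refine ⟨fun j => ∑ t, q t * w t j, ?_, ?_⟩
  · intro i hi
    have hAv : ∀ t, ∑ j, vq i j * w t j = 0 := by
      intro t
      have := congrFun (hwker t) i
      simp only [Matrix.mulVec, dotProduct, Pi.zero_apply] at this
      rw [← this]
      exact Finset.sum_congr rfl fun j _ => by rw [hAmem i hi j]
    calc ∑ j, vq i j * ∑ t, q t * w t j
        = ∑ j, ∑ t, q t * (vq i j * w t j) := by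
          refine Finset.sum_congr rfl fun j _ => ?_
          rw [Finset.mul_sum]
          exact Finset.sum_congr rfl fun t _ => by ring
      _ = ∑ t, ∑ j, q t * (vq i j * w t j) := Finset.sum_comm
      _ = ∑ t, q t * ∑ j, vq i j * w t j := by simp_rw [Finset.mul_sum]
      _ = 0 := by simp [hAv]
  · intro i hi
    have hdUi : F i d ∈ Set.Ioi (0:ℝ) := by
      have := Set.mem_iInter.mp hdU i
      rw [if_neg hi] at this
      exact this
    have hcast : ((∑ j, vq i j * ∑ t, q t * w t j : ℚ) : ℝ) = F i d := by
      push_cast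
      show _ = ∑ t, d t * (∑ j, (vq i j : ℝ) * (w t j : ℝ))
      calc ∑ j, (vq i j : ℝ) * ∑ t, (q t : ℝ) * (w t j : ℝ)
          = ∑ j, ∑ t, (q t : ℝ) * ((vq i j : ℝ) * (w t j : ℝ)) := by
            refine Finset.sum_congr rfl fun j _ => ?_
            rw [Finset.mul_sum]
            exact Finset.sum_congr rfl fun t _ => by ring
        _ = ∑ t, ∑ j, (q t : ℝ) * ((vq i j : ℝ) * (w t j : ℝ)) := Finset.sum_comm
        _ = ∑ t, d t * (∑ j, (vq i j : ℝ) * (w t j : ℝ)) := by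
            refine Finset.sum_congr rfl fun t _ => ?_
            rw [Finset.mul_sum, hq t]
    have : (0:ℝ) < ((∑ j, vq i j * ∑ t, q t * w t j : ℚ) : ℝ) := by
      rw [hcast]; exact hdUi
    exact_mod_cast this

end AuxRational

section AuxCone

variable {n k : ℕ} (v : Fin k → Euc n)

/-- The cone generated by a finite family of vectors. -/
def coneOf : Set (Euc n) :=
  {x | ∃ lam : Fin k → ℝ, (∀ i, 0 ≤ lam i) ∧ x = ∑ i, lam i • v i}

lemma gen_mem_coneOf (i : Fin k) : v i ∈ coneOf v := by
  classical
  refine ⟨fun i' => if i' = i then 1 else 0, fun i' => by positivity, ?_⟩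
  simp [ite_smul]

lemma inner_sum_smul (w : Euc n) (lam : Fin k → ℝ) :
    ⟪w, ∑ i, lam i • v i⟫ = ∑ i, lam i * ⟪w, v i⟫ := by
  rw [inner_sum]
  exact Finset.sum_congr rfl fun i _ => real_inner_smul_right w (v i) (lam i)

lemma mem_dualCone_coneOf (w : Euc n) :
    w ∈ dualCone (coneOf v) ↔ ∀ i, 0 ≤ ⟪w, v i⟫ := by
  constructor
  · exact fun hw i => hw _ (gen_mem_coneOf v i)
  · rintro h x ⟨lam, hlam, rfl⟩
    rw [inner_sum_smul]
    exact Finset.sum_nonneg fun i _ => mul_nonneg (hlam i) (h i)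

lemma mem_dualCone_face (u : Euc n) (hu : u ∈ dualCone (coneOf v)) (w : Euc n) :
    w ∈ dualCone (coneOf v ∩ {x | ⟪u, x⟫ = 0}) ↔ ∀ i, ⟪u, v i⟫ = 0 → 0 ≤ ⟪w, v i⟫ := by
  constructor
  · intro hw i hi
    exact hw _ ⟨gen_mem_coneOf v i, hi⟩
  · rintro h x ⟨⟨lam, hlam, rfl⟩, hx0⟩
    rw [Set.mem_setOf_eq, inner_sum_smul] at hx0
    have hterm : ∀ i ∈ Finset.univ, 0 ≤ lam i * ⟪u, v i⟫ :=
      fun i _ => mul_nonneg (hlam i) (hu _ (gen_mem_coneOf v i))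
    have hzero := (Finset.sum_eq_zero_iff_of_nonneg hterm).mp hx0
    rw [inner_sum_smul]
    refine Finset.sum_nonneg fun i _ => ?_
    by_cases hi : ⟪u, v i⟫ = 0
    · exact mul_nonneg (hlam i) (h i hi)
    · have : lam i = 0 := by
        have := hzero i (Finset.mem_univ i)
        rcases mul_eq_zero.mp this with h' | h'
        · exact h'
        · exact absurd h' hi
      simp [this]

lemma inner_eq_sum {n : ℕ} (x y : Euc n) : ⟪x, y⟫ = ∑ j, x j * y j := by
  rw [PiLp.inner_apply]
  simp [RCLike.inner_apply, conj_trivial]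
  exact Finset.sum_congr rfl fun j _ => mul_comm _ _

end AuxCone

section AuxMonoidAlgebra

variable {M : Type} [AddCommGroup M] (𝕜 : Type) [Field 𝕜]

lemma incl_injective {S T : AddSubmonoid M} (h : S ≤ T) :
    Function.Injective (AddSubmonoid.inclusion h) := by
  intro a b hab
  have : ((AddSubmonoid.inclusion h a : T) : M) = ((AddSubmonoid.inclusion h b : T) : M) := by
    rw [hab]
  exact Subtype.ext this

lemma mapDomainRingHom_single {S T : AddSubmonoid M} (h : S ≤ T) (a : S) (b : 𝕜) :
    AddMonoidAlgebra.mapDomainRingHom 𝕜 (AddSubmonoid.inclusion h) (AddMonoidAlgebra.single a b)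
      = AddMonoidAlgebra.single (AddSubmonoid.inclusion h a) b :=
  AddMonoidAlgebra.mapDomain_single

/-- The monoid-algebra inclusion associated to a localization of monoids is a
localization of rings. -/
lemma loc_away {S T : AddSubmonoid M} (h : S ≤ T) (z : M) (hzS : z ∈ S) (hzT : -z ∈ T)
    (habs : ∀ w ∈ T, ∃ m : ℕ, w + m • z ∈ S) :
    @IsLocalization.Away (AddMonoidAlgebra 𝕜 S) _ (AddMonoidAlgebra.single (⟨z, hzS⟩ : S) (1:𝕜))
      (AddMonoidAlgebra 𝕜 T) _
      ((AddMonoidAlgebra.mapDomainRingHom 𝕜 (AddSubmonoid.inclusion h)).toAlgebra) := by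
  letI f := AddMonoidAlgebra.mapDomainRingHom 𝕜 (AddSubmonoid.inclusion h)
  letI : Algebra (AddMonoidAlgebra 𝕜 S) (AddMonoidAlgebra 𝕜 T) := f.toAlgebra
  set zS : S := ⟨z, hzS⟩ with hzSdef
  set rloc : AddMonoidAlgebra 𝕜 S := AddMonoidAlgebra.single zS (1:𝕜) with hrloc
  have halg : (algebraMap (AddMonoidAlgebra 𝕜 S) (AddMonoidAlgebra 𝕜 T)) = f := rfl
  have hfr_unit : IsUnit (f rloc) := by
    refine IsUnit.of_mul_eq_one (AddMonoidAlgebra.single (⟨-z, hzT⟩ : T) 1) ?_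
    rw [hrloc, mapDomainRingHom_single, AddMonoidAlgebra.single_mul_single]
    have he : (AddSubmonoid.inclusion h) zS + (⟨-z, hzT⟩ : T) = 0 := by
      ext; show z + -z = 0; simp
    rw [he, mul_one]
    rfl
  have hinj : Function.Injective f := AddMonoidAlgebra.mapDomain_injective (incl_injective h)
  refine ⟨⟨?_, ?_, ?_⟩⟩
  · rintro ⟨y, m, rfl⟩
    rw [halg]
    simp only [map_pow]
    exact hfr_unit.pow m
  · intro t
    suffices hP : ∃ (m : ℕ) (x : AddMonoidAlgebra 𝕜 S), t * f (rloc ^ m) = f x by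
      obtain ⟨m, x, hx⟩ := hP
      exact ⟨(x, ⟨rloc ^ m, m, rfl⟩), by simpa [halg] using hx⟩
    have hsingle_case : ∀ (a : T) (b : 𝕜),
        ∃ (m : ℕ) (x : AddMonoidAlgebra 𝕜 S),
          (AddMonoidAlgebra.single a b) * f (rloc ^ m) = f x := by
      intro a b
      obtain ⟨m2, hm2⟩ := habs a.1 a.2
      refine ⟨m2, AddMonoidAlgebra.single (⟨a.1 + m2 • z, hm2⟩ : S) b, ?_⟩
      rw [hrloc, AddMonoidAlgebra.single_pow, one_pow, mapDomainRingHom_single,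
        mapDomainRingHom_single, AddMonoidAlgebra.single_mul_single, mul_one]
      rfl
    have hadd : ∀ t1 t2 : AddMonoidAlgebra 𝕜 T,
        (∃ (m : ℕ) (x : AddMonoidAlgebra 𝕜 S), t1 * f (rloc ^ m) = f x) →
        (∃ (m : ℕ) (x : AddMonoidAlgebra 𝕜 S), t2 * f (rloc ^ m) = f x) →
        (∃ (m : ℕ) (x : AddMonoidAlgebra 𝕜 S), (t1 + t2) * f (rloc ^ m) = f x) := by
      rintro t1 t2 ⟨m1, x1, hx1⟩ ⟨m2, x2, hx2⟩
      refine ⟨m1 + m2, x1 * rloc ^ m2 + x2 * rloc ^ m1, ?_⟩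
      rw [map_add, map_mul, map_mul, pow_add, map_mul]
      calc (t1 + t2) * (f (rloc ^ m1) * f (rloc ^ m2))
          = (t1 * f (rloc ^ m1)) * f (rloc ^ m2) + (t2 * f (rloc ^ m2)) * f (rloc ^ m1) := by ring
        _ = _ := by rw [hx1, hx2]
    induction t using AddMonoidAlgebra.induction with
    | zero => exact ⟨0, 0, by simp⟩
    | single_add a b t' hat' hb ih => exact hadd _ _ (hsingle_case a b) ih
  · intro x y hxy
    rw [halg] at hxy
    exact ⟨1, by rw [hinj hxy]⟩

end AuxMonoidAlgebra

open AlgebraicGeometry in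
/-- If `τ` is a face of a strictly convex rational
polyhedral cone `σ ⊆ ℝ^n`, then `σ^∨ ∩ ℤ^n ⊆ τ^∨ ∩ ℤ^n`, and the induced
morphism of affine schemes `Spec k[τ^∨ ∩ ℤ^n] → Spec k[σ^∨ ∩ ℤ^n]` is an
open immersion. -/
theorem face_inclusion_is_open_immersion {n : ℕ} (𝕜 : Type) [Field 𝕜]
    (σ τ : Set (Euc n)) (hσ : IsRatPolyCone σ) (hconv : IsStrictlyConvexCone σ)
    (hτ : IsFaceOf τ σ) :
    dualLatticeMonoid σ ≤ dualLatticeMonoid τ ∧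
    ∀ h : dualLatticeMonoid σ ≤ dualLatticeMonoid τ,
      IsOpenImmersion (Spec.map (CommRingCat.ofHom
        (AddMonoidAlgebra.mapDomainRingHom 𝕜 (AddSubmonoid.inclusion h)))) := by
  classical
  obtain ⟨k, v, hint, rfl⟩ := hσ
  obtain ⟨u, hu, rfl⟩ := hτ
  have hco : {x | ∃ lam : Fin k → ℝ, (∀ i, 0 ≤ lam i) ∧ x = ∑ i, lam i • v i} = coneOf v := rfl
  choose V hV using fun i => hint i
  set vq : Fin k → Fin n → ℚ := fun i j => (V i j : ℚ) with hvq
  have hvr : ∀ i j, ((vq i j : ℚ) : ℝ) = v i j := by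
    intro i j
    rw [hV i j, hvq]
    push_cast
    rfl
  have hinner : ∀ (x : Euc n) (i : Fin k), ⟪x, v i⟫ = ∑ j, (vq i j : ℝ) * x j := by
    intro x i
    rw [inner_eq_sum]
    exact Finset.sum_congr rfl fun j _ => by rw [← hvr i j]; ring
  set I : Set (Fin k) := {i | ⟪u, v i⟫ = 0} with hI
  have hu' : u ∈ dualCone (coneOf v) := by rw [← hco]; exact hu
  have hu0 : ∀ i ∈ I, ∑ j, (vq i j : ℝ) * u j = 0 := fun i hi => by
    rw [← hinner u i]; exact hi
  have hupos : ∀ i ∉ I, 0 < ∑ j, (vq i j : ℝ) * u j := fun i hi => by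
    rw [← hinner u i]
    exact lt_of_le_of_ne (hu' _ (gen_mem_coneOf v i)) (Ne.symm hi)
  obtain ⟨y, hy0, hypos⟩ := rat_sign_pattern vq I (fun j => u j) hu0 hupos
  obtain ⟨z, N, hN, hzy⟩ := int_scale y
  have hz : ∀ i, ⟪toRealVec z, v i⟫ = (N : ℝ) * ((∑ j, vq i j * y j : ℚ) : ℝ) := by
    intro i
    rw [hinner (toRealVec z) i]
    have : ∀ j, (toRealVec z) j = (N : ℝ) * ((y j : ℚ) : ℝ) := by
      intro j
      show ((z j : ℤ) : ℝ) = (N : ℝ) * ((y j : ℚ) : ℝ)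
      exact_mod_cast congrArg (fun q : ℚ => (q : ℝ)) (hzy j)
    calc ∑ j, (vq i j : ℝ) * (toRealVec z) j
        = ∑ j, (N : ℝ) * ((vq i j : ℝ) * (y j : ℝ)) := by
          refine Finset.sum_congr rfl fun j _ => ?_
          rw [this j]; ring
      _ = (N : ℝ) * ∑ j, (vq i j : ℝ) * (y j : ℝ) := by rw [Finset.mul_sum]
      _ = (N : ℝ) * ((∑ j, vq i j * y j : ℚ) : ℝ) := by push_cast; ring
  have hz0 : ∀ i, ⟪u, v i⟫ = 0 → ⟪toRealVec z, v i⟫ = 0 := by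
    intro i hi
    rw [hz i, hy0 i hi]
    simp
  have hzpos : ∀ i, ⟪u, v i⟫ ≠ 0 → 0 < ⟪toRealVec z, v i⟫ := by
    intro i hi
    rw [hz i]
    have h1 : (0:ℝ) < (N : ℝ) := by exact_mod_cast hN
    have h2 : (0:ℝ) < ((∑ j, vq i j * y j : ℚ) : ℝ) := by exact_mod_cast hypos i hi
    positivity
  -- membership facts
  have hzσ : z ∈ dualLatticeMonoid {x | ∃ lam : Fin k → ℝ, (∀ i, 0 ≤ lam i) ∧ x = ∑ i, lam i • v i} := by
    show toRealVec z ∈ dualCone (coneOf v)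
    refine (mem_dualCone_coneOf v (toRealVec z)).mpr fun i => ?_
    by_cases hi : ⟪u, v i⟫ = 0
    · rw [hz0 i hi]
    · exact le_of_lt (hzpos i hi)
  have htneg : toRealVec (-z) = -toRealVec z := by
    ext j
    show (((-z) j : ℤ) : ℝ) = -((z j : ℤ) : ℝ)
    rw [Pi.neg_apply]
    push_cast
    ring
  have hzτ : -z ∈ dualLatticeMonoid ({x | ∃ lam : Fin k → ℝ, (∀ i, 0 ≤ lam i) ∧ x = ∑ i, lam i • v i} ∩ {x | ⟪u, x⟫ = 0}) := by
    show toRealVec (-z) ∈ dualCone (coneOf v ∩ {x | ⟪u, x⟫ = 0})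
    refine (mem_dualCone_face v u hu' _).mpr fun i hi => ?_
    rw [htneg, inner_neg_left, hz0 i hi]
    simp
  have habs : ∀ w ∈ dualLatticeMonoid ({x | ∃ lam : Fin k → ℝ, (∀ i, 0 ≤ lam i) ∧ x = ∑ i, lam i • v i} ∩ {x | ⟪u, x⟫ = 0}),
      ∃ m : ℕ, w + m • z ∈ dualLatticeMonoid {x | ∃ lam : Fin k → ℝ, (∀ i, 0 ≤ lam i) ∧ x = ∑ i, lam i • v i} := by
    intro w hw
    have hw' : ∀ i, ⟪u, v i⟫ = 0 → 0 ≤ ⟪toRealVec w, v i⟫ :=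
      (mem_dualCone_face v u hu' (toRealVec w)).mp hw
    have hex : ∀ i, ∃ mi : ℕ, ⟪u, v i⟫ ≠ 0 →
        0 ≤ ⟪toRealVec w, v i⟫ + mi * ⟪toRealVec z, v i⟫ := by
      intro i
      by_cases hi : ⟪u, v i⟫ = 0
      · exact ⟨0, fun hc => absurd hi hc⟩
      · obtain ⟨mi, hmi⟩ := Archimedean.arch (-⟪toRealVec w, v i⟫) (hzpos i hi)
        rw [nsmul_eq_mul] at hmi
        exact ⟨mi, fun _ => by linarith⟩
    choose mi hmi using hex
    set m : ℕ := Finset.univ.sup mi with hm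
    refine ⟨m, ?_⟩
    show toRealVec (w + m • z) ∈ dualCone (coneOf v)
    have htr : toRealVec (w + m • z) = toRealVec w + (m : ℝ) • toRealVec z := by
      ext j
      show (((w + m • z) j : ℤ) : ℝ) = (w j : ℝ) + (m : ℝ) * ((z j : ℤ) : ℝ)
      have : (w + m • z) j = w j + (m : ℤ) * z j := by
        show w j + m • z j = w j + (m : ℤ) * z j
        rw [nsmul_eq_mul]
      rw [this]
      push_cast
      try ring
    refine (mem_dualCone_coneOf v _).mpr fun i => ?_
    rw [htr, inner_add_left, real_inner_smul_left]
    by_cases hi : ⟪u, v i⟫ = 0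
    · rw [hz0 i hi]
      simpa using hw' i hi
    · have h1 := hmi i hi
      have h2 : (mi i : ℝ) ≤ (m : ℝ) := by
        exact_mod_cast Nat.cast_le.mpr (Finset.le_sup (Finset.mem_univ i))
      have h3 := le_of_lt (hzpos i hi)
      nlinarith
  -- conclusion
  have hle : dualLatticeMonoid {x | ∃ lam : Fin k → ℝ, (∀ i, 0 ≤ lam i) ∧ x = ∑ i, lam i • v i}
      ≤ dualLatticeMonoid ({x | ∃ lam : Fin k → ℝ, (∀ i, 0 ≤ lam i) ∧ x = ∑ i, lam i • v i} ∩ {x | ⟪u, x⟫ = 0}) :=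
    fun w hw x hx => hw x hx.1
  refine ⟨hle, fun h => ?_⟩
  letI : Algebra
      (AddMonoidAlgebra 𝕜 (dualLatticeMonoid {x | ∃ lam : Fin k → ℝ, (∀ i, 0 ≤ lam i) ∧ x = ∑ i, lam i • v i}))
      (AddMonoidAlgebra 𝕜 (dualLatticeMonoid ({x | ∃ lam : Fin k → ℝ, (∀ i, 0 ≤ lam i) ∧ x = ∑ i, lam i • v i} ∩ {x | ⟪u, x⟫ = 0}))) :=
    (AddMonoidAlgebra.mapDomainRingHom 𝕜 (AddSubmonoid.inclusion h)).toAlgebra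
  haveI := loc_away 𝕜 h z hzσ hzτ habs
  have hoi := AlgebraicGeometry.IsOpenImmersion.of_isLocalization
    (S := AddMonoidAlgebra 𝕜 (dualLatticeMonoid ({x | ∃ lam : Fin k → ℝ, (∀ i, 0 ≤ lam i) ∧ x = ∑ i, lam i • v i} ∩ {x | ⟪u, x⟫ = 0})))
    (AddMonoidAlgebra.single (⟨z, hzσ⟩ : dualLatticeMonoid {x | ∃ lam : Fin k → ℝ, (∀ i, 0 ≤ lam i) ∧ x = ∑ i, lam i • v i}) (1:𝕜))
  rwa [RingHom.algebraMap_toAlgebra] at hoi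

end
end
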